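/- arXiv:2001.03603 — 3 statements merged into one kernel-verified Lean document; each statement's English description precedes it below -/
import Mathlib

section
/- Let (X_n) be an irreducible finite Markov chain with stationary distribution π, and A, B nonempty subsets of states. Then π(A) · T⁻(B,A) ≤ T⁺(A,B), where T⁺(A,B) = max_{x∈A} E_x[hitting time of B] and T⁻(B,A) = min_{x∈B} E_x[hitting time of A]. -/
open MeasureTheory ENNReal

/-- The event that the chain does not visit `A` during steps `0,…,n`,
i.e. the hitting time of `A` exceeds `n`. -/
def noHit {S : Type*} (A : Finset S) (n : ℕ) : Set (ℕ → S) :=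
  {ω | ∀ k ≤ n, ω k ∉ A}

/-- Expected hitting time `E_x[τ_A] = ∑_{n≥0} P_x[τ_A > n]`. -/
noncomputable def expHit {S : Type*} [MeasurableSpace S]
    (P : S → Measure (ℕ → S)) (x : S) (A : Finset S) : ENNReal :=
  ∑' n : ℕ, P x (noHit A n)

/-- `n`-step transition probabilities (matrix power of the kernel). -/
noncomputable def matPow {S : Type*} [Fintype S] [DecidableEq S]
    (K : S → S → ENNReal) : ℕ → S → S → ENNReal
  | 0 => fun x y => if x = y then 1 else 0
  | n + 1 => fun x y => ∑ z, matPow K n x z * K z y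

/-- Irreducibility: every state reaches every state in some number of steps. -/
def IsIrreducibleKernel {S : Type*} [Fintype S] [DecidableEq S]
    (K : S → S → ENNReal) : Prop :=
  ∀ x y, ∃ n, 0 < matPow K n x y

/-- Row-stochastic kernel. -/
def IsStochastic {S : Type*} [Fintype S] (K : S → S → ENNReal) : Prop :=
  ∀ x, ∑ y, K x y = 1

/-- `π` is a stationary (probability) distribution for `K`. -/
def IsStationaryDistrib {S : Type*} [Fintype S] (K : S → S → ENNReal)
    (π : S → ENNReal) : Prop :=
  (∑ x, π x = 1) ∧ ∀ y, ∑ x, π x * K x y = π y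

/-- `P x` is the law of the Markov chain with kernel `K` started at `x`:
each `P x` is a probability measure whose finite-dimensional cylinder
probabilities are given by products of transition probabilities. -/
def IsMarkovChain {S : Type*} [Fintype S] [DecidableEq S] [MeasurableSpace S]
    (K : S → S → ENNReal) (P : S → Measure (ℕ → S)) : Prop :=
  (∀ x, IsProbabilityMeasure (P x)) ∧
  ∀ (x : S) (n : ℕ) (f : ℕ → S),
    P x {ω | ∀ i ≤ n, ω i = f i} =
      (if f 0 = x then 1 else 0) * ∏ i ∈ Finset.range n, K (f i) (f (i + 1))

namespace Stmt8Aux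

variable {S : Type*} [Fintype S] [DecidableEq S]

/-- `av K C n x` : probability of avoiding `C` at all times `0,…,n` starting at `x`. -/
noncomputable def av (K : S → S → ℝ≥0∞) (C : Finset S) : ℕ → S → ℝ≥0∞
  | 0 => fun x => if x ∈ C then 0 else 1
  | n+1 => fun x => if x ∈ C then 0 else ∑ y, K x y * av K C n y

lemma av_zero_def (K : S → S → ℝ≥0∞) (C : Finset S) (x : S) :
    av K C 0 x = if x ∈ C then 0 else 1 := rfl

lemma av_succ_def (K : S → S → ℝ≥0∞) (C : Finset S) (n : ℕ) (x : S) :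
    av K C (n+1) x = if x ∈ C then 0 else ∑ y, K x y * av K C n y := rfl

lemma av_of_mem {K : S → S → ℝ≥0∞} {C : Finset S} {x : S} (h : x ∈ C) (n : ℕ) :
    av K C n x = 0 := by cases n <;> simp [av_zero_def, av_succ_def, h]

lemma av_le_one {K : S → S → ℝ≥0∞} (hK : IsStochastic K) (C : Finset S) :
    ∀ n x, av K C n x ≤ 1 := by
  intro n
  induction n with
  | zero => intro x; rw [av_zero_def]; split <;> simp
  | succ n ih =>
    intro x; rw [av_succ_def]; split
    · exact zero_le_one
    · calc ∑ y, K x y * av K C n y ≤ ∑ y, K x y * 1 :=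
          Finset.sum_le_sum fun y _ => mul_le_mul_right (ih y) _
        _ = 1 := by simp [hK x]

lemma av_succ_le {K : S → S → ℝ≥0∞} (hK : IsStochastic K) (C : Finset S) :
    ∀ n x, av K C (n+1) x ≤ av K C n x := by
  intro n
  induction n with
  | zero =>
    intro x
    rw [av_succ_def, av_zero_def]
    split
    · exact le_rfl
    · calc ∑ y, K x y * av K C 0 y ≤ ∑ y, K x y * 1 :=
          Finset.sum_le_sum fun y _ => mul_le_mul_right (av_le_one hK C 0 y) _
        _ = 1 := by simp [hK x]
  | succ n ih =>
    intro x
    rw [av_succ_def, av_succ_def]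
    split
    · exact le_rfl
    · exact Finset.sum_le_sum fun y _ => mul_le_mul_right (ih y) _

lemma av_anti {K : S → S → ℝ≥0∞} (hK : IsStochastic K) (C : Finset S) {m n : ℕ}
    (h : m ≤ n) (x : S) : av K C n x ≤ av K C m x := by
  induction n, h using Nat.le_induction with
  | base => exact le_rfl
  | succ n hmn ih => exact le_trans (av_succ_le hK C n x) ih

lemma matPow_succ_left (K : S → S → ℝ≥0∞) (n : ℕ) (x y : S) :
    matPow K (n+1) x y = ∑ z, K x z * matPow K n z y := by
  induction n generalizing y with
  | zero =>
    show ∑ z, matPow K 0 x z * K z y = _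
    simp [matPow]
  | succ n ih =>
    show ∑ z, matPow K (n+1) x z * K z y = _
    calc ∑ z, matPow K (n+1) x z * K z y
        = ∑ z, (∑ w, K x w * matPow K n w z) * K z y := by
          refine Finset.sum_congr rfl fun z _ => ?_; rw [ih]
      _ = ∑ z, ∑ w, K x w * matPow K n w z * K z y := by
          refine Finset.sum_congr rfl fun z _ => ?_; rw [Finset.sum_mul]
      _ = ∑ w, ∑ z, K x w * matPow K n w z * K z y := Finset.sum_comm
      _ = ∑ w, K x w * ∑ z, matPow K n w z * K z y := by
          refine Finset.sum_congr rfl fun w _ => ?_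
          rw [Finset.mul_sum]
          exact Finset.sum_congr rfl fun z _ => (mul_assoc _ _ _)
      _ = ∑ w, K x w * matPow K (n+1) w y := rfl

lemma av_add_matPow_le_one {K : S → S → ℝ≥0∞} (hK : IsStochastic K) {C : Finset S}
    {c : S} (hc : c ∈ C) : ∀ n x, av K C n x + matPow K n x c ≤ 1 := by
  intro n
  induction n with
  | zero =>
    intro x
    rw [av_zero_def]
    show _ + (if x = c then 1 else 0) ≤ 1
    by_cases hx : x ∈ C
    · simp only [if_pos hx, zero_add]; split <;> simp
    · have : x ≠ c := fun h => hx (h ▸ hc)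
      simp [hx, this]
  | succ n ih =>
    intro x
    rw [av_succ_def, matPow_succ_left]
    have h1 : (if x ∈ C then 0 else ∑ y, K x y * av K C n y) ≤ ∑ y, K x y * av K C n y := by
      split <;> simp
    calc (if x ∈ C then 0 else ∑ y, K x y * av K C n y) + ∑ z, K x z * matPow K n z c
        ≤ ∑ y, K x y * av K C n y + ∑ z, K x z * matPow K n z c := add_le_add_left h1 _
      _ = ∑ y, (K x y * av K C n y + K x y * matPow K n y c) := by
          rw [Finset.sum_add_distrib]
      _ = ∑ y, K x y * (av K C n y + matPow K n y c) := by
          refine Finset.sum_congr rfl fun y _ => (mul_add _ _ _).symm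
      _ ≤ ∑ y, K x y * 1 := Finset.sum_le_sum fun y _ => mul_le_mul_right (ih y) _
      _ = 1 := by simp [hK x]

lemma av_sub_mul {K : S → S → ℝ≥0∞} {C : Finset S} {n : ℕ} {c : ℝ≥0∞}
    (h : ∀ y, av K C n y ≤ c) : ∀ m x, av K C (n + m) x ≤ av K C m x * c := by
  intro m
  induction m with
  | zero =>
    intro x
    by_cases hx : x ∈ C
    · simp [av_of_mem hx]
    · simpa [av_zero_def, hx] using h x
  | succ m ih =>
    intro x
    show av K C ((n + m) + 1) x ≤ _
    rw [av_succ_def, av_succ_def]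
    by_cases hx : x ∈ C
    · simp [hx]
    · simp only [if_neg hx]
      rw [Finset.sum_mul]
      refine Finset.sum_le_sum fun y _ => ?_
      rw [mul_assoc]
      exact mul_le_mul_right (ih y) _

lemma av_pow {K : S → S → ℝ≥0∞} {C : Finset S} {n : ℕ} {c : ℝ≥0∞}
    (h : ∀ y, av K C n y ≤ c) : ∀ k x, av K C (k * n) x ≤ c ^ k := by
  intro k
  induction k with
  | zero => intro x; rw [Nat.zero_mul, av_zero_def]; split <;> simp
  | succ k ih =>
    intro x
    have : (k + 1) * n = n + k * n := by ring
    rw [this]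
    calc av K C (n + k * n) x ≤ av K C (k * n) x * c := av_sub_mul h (k*n) x
      _ ≤ c ^ k * c := mul_le_mul_left (ih x) _
      _ = c ^ (k+1) := (pow_succ c k).symm

/-- algebraic expected hitting time -/
noncomputable def eH (K : S → S → ℝ≥0∞) (C : Finset S) (x : S) : ℝ≥0∞ :=
  ∑' n, av K C n x

lemma eH_of_mem {K : S → S → ℝ≥0∞} {C : Finset S} {x : S} (h : x ∈ C) :
    eH K C x = 0 := by simp [eH, av_of_mem h]

lemma eH_of_not_mem {K : S → S → ℝ≥0∞} {C : Finset S} {x : S} (h : x ∉ C) :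
    eH K C x = 1 + ∑ y, K x y * eH K C y := by
  rw [eH, tsum_eq_zero_add' ENNReal.summable, av_zero_def, if_neg h]
  congr 1
  calc ∑' n, av K C (n+1) x = ∑' n, ∑ y, K x y * av K C n y := by
        refine tsum_congr fun n => ?_; rw [av_succ_def, if_neg h]
    _ = ∑ y, ∑' n, K x y * av K C n y := Summable.tsum_finsetSum (fun i _ => ENNReal.summable)
    _ = ∑ y, K x y * eH K C y := by
        refine Finset.sum_congr rfl fun y _ => ?_; rw [ENNReal.tsum_mul_left]; rfl

lemma eH_eq_iSup (K : S → S → ℝ≥0∞) (C : Finset S) (x : S) :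
    eH K C x = ⨆ N, ∑ n ∈ Finset.range N, av K C n x := ENNReal.tsum_eq_iSup_nat

lemma eH_lt_top {K : S → S → ℝ≥0∞} (hK : IsStochastic K) (hirr : IsIrreducibleKernel K)
    {C : Finset S} (hC : C.Nonempty) (x : S) : eH K C x < ⊤ := by
  obtain ⟨c, hc⟩ := hC
  set N : S → ℕ := fun y => (hirr y c).choose with hN
  set n₁ : ℕ := (Finset.univ.sup N) + 1 with hn₁
  set δ : ℝ≥0∞ := Finset.univ.sup (fun y => av K C n₁ y) with hδ
  have hδlt : δ < 1 := by
    rw [hδ]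
    rw [Finset.sup_lt_iff (by norm_num : (⊥ : ℝ≥0∞) < 1)]
    intro y _
    have h1 : av K C n₁ y ≤ av K C (N y) y :=
      av_anti hK C (le_trans (Finset.le_sup (Finset.mem_univ y)) (Nat.le_succ _)) y
    have h2 : av K C (N y) y + matPow K (N y) y c ≤ 1 := av_add_matPow_le_one hK hc _ y
    have h3 : 0 < matPow K (N y) y c := (hirr y c).choose_spec
    have h4 : av K C (N y) y < 1 := by
      calc av K C (N y) y < av K C (N y) y + matPow K (N y) y c :=
            lt_add_right (ne_top_of_le_ne_top one_ne_top (av_le_one hK C _ y)) h3.ne'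
        _ ≤ 1 := h2
    exact lt_of_le_of_lt h1 h4
  have hδle : ∀ y, av K C n₁ y ≤ δ := fun y => Finset.le_sup (Finset.mem_univ y)
  have hpt : ∀ n, av K C n x ≤ δ ^ (n / n₁) := by
    intro n
    have h1 : (n / n₁) * n₁ ≤ n := Nat.div_mul_le_self n n₁
    exact le_trans (av_anti hK C h1 x) (av_pow hδle (n / n₁) x)
  have hne : NeZero n₁ := ⟨by omega⟩
  calc eH K C x ≤ ∑' n, δ ^ (n / n₁) := ENNReal.tsum_le_tsum hpt
    _ = ∑' p : ℕ × Fin n₁, δ ^ p.1 := by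
        rw [← Equiv.tsum_eq (Nat.divModEquiv n₁) (fun p : ℕ × Fin n₁ => δ ^ p.1)]
        rfl
    _ = ∑' k : ℕ, ∑' r : Fin n₁, δ ^ k :=
        ENNReal.tsum_prod (f := fun (k : ℕ) (_ : Fin n₁) => δ ^ k)
    _ = ∑' k : ℕ, (n₁ : ℝ≥0∞) * δ ^ k := by
        refine tsum_congr fun k => ?_
        rw [tsum_fintype]
        simp [Finset.sum_const, nsmul_eq_mul]
    _ = (n₁ : ℝ≥0∞) * ∑' k, δ ^ k := ENNReal.tsum_mul_left
    _ = (n₁ : ℝ≥0∞) * (1 - δ)⁻¹ := by rw [ENNReal.tsum_geometric]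
    _ < ⊤ := by
        apply ENNReal.mul_lt_top (by simp)
        simp only [ENNReal.inv_lt_top]
        exact tsub_pos_iff_lt.mpr hδlt

/-- occupation of `D` before hitting `C` -/
noncomputable def oc (K : S → S → ℝ≥0∞) (C D : Finset S) : ℕ → S → ℝ≥0∞
  | 0 => fun x => if x ∈ C then 0 else if x ∈ D then 1 else 0
  | n+1 => fun x => if x ∈ C then 0 else ∑ y, K x y * oc K C D n y

lemma oc_zero_def (K : S → S → ℝ≥0∞) (C D : Finset S) (x : S) :
    oc K C D 0 x = if x ∈ C then 0 else if x ∈ D then 1 else 0 := rfl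

lemma oc_succ_def (K : S → S → ℝ≥0∞) (C D : Finset S) (n : ℕ) (x : S) :
    oc K C D (n+1) x = if x ∈ C then 0 else ∑ y, K x y * oc K C D n y := rfl

noncomputable def gH (K : S → S → ℝ≥0∞) (C D : Finset S) (x : S) : ℝ≥0∞ :=
  ∑' n, oc K C D n x

lemma oc_of_mem {K : S → S → ℝ≥0∞} {C D : Finset S} {x : S} (h : x ∈ C) (n : ℕ) :
    oc K C D n x = 0 := by
  cases n
  · rw [oc_zero_def, if_pos h]
  · rw [oc_succ_def, if_pos h]

lemma gH_of_mem {K : S → S → ℝ≥0∞} {C D : Finset S} {x : S} (h : x ∈ C) :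
    gH K C D x = 0 := by
  simp [gH, oc_of_mem h]

lemma gH_of_not_mem {K : S → S → ℝ≥0∞} {C D : Finset S} {x : S} (h : x ∉ C) :
    gH K C D x = (if x ∈ D then 1 else 0) + ∑ y, K x y * gH K C D y := by
  rw [gH, tsum_eq_zero_add' ENNReal.summable, oc_zero_def, if_neg h]
  congr 1
  calc ∑' n, oc K C D (n+1) x = ∑' n, ∑ y, K x y * oc K C D n y := by
        refine tsum_congr fun n => ?_; rw [oc_succ_def, if_neg h]
    _ = ∑ y, ∑' n, K x y * oc K C D n y := Summable.tsum_finsetSum (fun i _ => ENNReal.summable)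
    _ = ∑ y, K x y * gH K C D y := by
        refine Finset.sum_congr rfl fun y _ => ?_; rw [ENNReal.tsum_mul_left]; rfl

end Stmt8Aux
namespace Stmt8Aux

variable {S : Type*} [Fintype S] [DecidableEq S]

/-- extension of a finite word to `ℕ → S` -/
def extg {n : ℕ} (g : Fin (n+1) → S) : ℕ → S :=
  fun i => if h : i ≤ n then g ⟨i, Nat.lt_succ_of_le h⟩ else g 0

lemma extg_le {n : ℕ} (g : Fin (n+1) → S) {i : ℕ} (h : i ≤ n) :
    extg g i = g ⟨i, Nat.lt_succ_of_le h⟩ := dif_pos h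

/-- cylinder set -/
def cylg (n : ℕ) (g : Fin (n+1) → S) : Set (ℕ → S) :=
  {ω | ∀ i ≤ n, ω i = extg g i}

/-- weight of a word -/
noncomputable def wtg (K : S → S → ℝ≥0∞) (x : S) {n : ℕ} (g : Fin (n+1) → S) : ℝ≥0∞ :=
  (if g 0 = x then 1 else 0) * ∏ i : Fin n, K (g i.castSucc) (g i.succ)

lemma mem_cylg_self (n : ℕ) (ω : ℕ → S) :
    ω ∈ cylg n (fun i : Fin (n+1) => ω i) := by
  intro i hi
  rw [extg_le _ hi]

lemma cylg_val {n : ℕ} {g : Fin (n+1) → S} {ω : ℕ → S} (hω : ω ∈ cylg n g)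
    {i : ℕ} (hi : i ≤ n) : ω i = g ⟨i, Nat.lt_succ_of_le hi⟩ := by
  rw [hω i hi, extg_le _ hi]

section Meas

variable [MeasurableSpace S] {K : S → S → ℝ≥0∞} {P : S → Measure (ℕ → S)}

lemma P_cylg (hMC : IsMarkovChain K P) (x : S) (n : ℕ) (g : Fin (n+1) → S) :
    P x (cylg n g) = wtg K x g := by
  have h := hMC.2 x n (extg g)
  have hset : cylg n g = {ω | ∀ i ≤ n, ω i = extg g i} := rfl
  rw [hset, h, wtg]
  congr 1
  · rw [← Fin.prod_univ_eq_prod_range (fun i => K (extg g i) (extg g (i+1))) n]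
    refine Finset.prod_congr rfl fun i _ => ?_
    rw [extg_le g (le_of_lt i.2), extg_le g i.2]
    rfl

end Meas

lemma sum_wtg {K : S → S → ℝ≥0∞} (hK : IsStochastic K) (C : Finset S) :
    ∀ (n : ℕ) (x : S),
      ∑ g : Fin (n+1) → S, (if (∀ i, g i ∉ C) then wtg K x g else 0) = av K C n x := by
  intro n
  induction n with
  | zero =>
    intro x
    rw [← Equiv.sum_comp (Equiv.funUnique (Fin 1) S).symm
      (fun g : Fin 1 → S => if (∀ i, g i ∉ C) then wtg K x g else 0)]
    have : ∀ s : S,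
        (if (∀ i : Fin 1, ((Equiv.funUnique (Fin 1) S).symm s) i ∉ C) then
          wtg K x ((Equiv.funUnique (Fin 1) S).symm s) else 0)
        = if s = x then (if s ∈ C then 0 else 1) else 0 := by
      intro s
      simp only [Equiv.funUnique_symm_apply, Fin.forall_fin_one]
      by_cases hs : s ∈ C <;> by_cases hsx : s = x <;>
        simp [wtg, hs, hsx, Function.const]
    rw [Finset.sum_congr rfl fun s _ => this s, Finset.sum_ite_eq' Finset.univ x
      (fun s => if s ∈ C then 0 else 1)]
    simp [av_zero_def]
  | succ n ih =>
    intro x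
    rw [← Equiv.sum_comp (Fin.consEquiv (fun _ : Fin (n+2) => S))
      (fun g : Fin (n+2) → S => if (∀ i, g i ∉ C) then wtg K x g else 0)]
    rw [Fintype.sum_prod_type]
    have hsummand : ∀ (s : S) (t : Fin (n+1) → S),
        (if (∀ i, (Fin.consEquiv (fun _ : Fin (n+2) => S)) (s, t) i ∉ C) then
          wtg K x ((Fin.consEquiv (fun _ : Fin (n+2) => S)) (s, t)) else 0)
        = if s = x then (if s ∈ C then 0 else
            (if (∀ i, t i ∉ C) then K s (t 0) * wtg K (t 0) t else 0)) else 0 := by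
      intro s t
      set ct := Fin.cons (α := fun _ : Fin (n+2) => S) s t with hct
      have hcons : (Fin.consEquiv (fun _ : Fin (n+2) => S)) (s, t) = ct := rfl
      rw [hcons]
      have hcond : (∀ i : Fin (n+2), ct i ∉ C) ↔ (s ∉ C ∧ ∀ i, t i ∉ C) := by
        rw [Fin.forall_fin_succ]
        simp [hct, Fin.cons_zero, Fin.cons_succ]
      have hwtg : wtg K x ct =
          (if s = x then 1 else 0) * (K s (t 0) * ∏ i : Fin n, K (t i.castSucc) (t i.succ)) := by
        rw [wtg]
        have h0 : ct 0 = s := Fin.cons_zero _ _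
        rw [h0]
        congr 1
        rw [Fin.prod_univ_succ (fun i : Fin (n+1) => K (ct i.castSucc) (ct i.succ))]
        congr 1
      rw [hwtg]
      by_cases hs : s = x <;> by_cases hsC : s ∈ C <;> by_cases ht : (∀ i, t i ∉ C) <;>
        simp [hs, hsC, ht, hcond, wtg]
    rw [Finset.sum_congr rfl fun s _ => Finset.sum_congr rfl fun t _ => hsummand s t]
    rw [Finset.sum_comm]
    rw [Finset.sum_congr rfl fun t _ => Finset.sum_ite_eq' Finset.univ x _]
    simp only [Finset.mem_univ, if_true]
    rw [av_succ_def]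
    by_cases hx : x ∈ C
    · simp [hx]
    · simp only [if_neg hx]
      -- ∑ t, (if cond t then K x (t 0) * wtg K (t 0) t else 0) = ∑ y, K x y * av K C n y
      have hstep : ∀ t : Fin (n+1) → S,
          (if (∀ i, t i ∉ C) then K x (t 0) * wtg K (t 0) t else 0)
          = ∑ y, K x y * (if t 0 = y then (if (∀ i, t i ∉ C) then wtg K y t else 0) else 0) := by
        intro t
        have h1 : ∀ y : S, K x y * (if t 0 = y then (if (∀ i, t i ∉ C) then wtg K y t else 0) else 0)
            = (if t 0 = y then (if (∀ i, t i ∉ C) then K x y * wtg K y t else 0) else 0) := by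
          intro y
          by_cases h1 : t 0 = y <;> by_cases h2 : (∀ i, t i ∉ C) <;> simp [h1, h2]
        rw [Finset.sum_congr rfl fun y _ => h1 y]
        rw [Finset.sum_ite_eq Finset.univ (t 0)
          (fun y => if (∀ i, t i ∉ C) then K x y * wtg K y t else 0)]
        simp
      rw [Finset.sum_congr rfl fun t _ => hstep t]
      rw [Finset.sum_comm]
      refine Finset.sum_congr rfl fun y _ => ?_
      rw [← Finset.mul_sum]
      congr 1
      rw [← ih y]
      have h2 : ∀ t : Fin (n+1) → S,
          (if t 0 = y then (if (∀ i, t i ∉ C) then wtg K y t else 0) else 0)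
          = if (∀ i, t i ∉ C) then wtg K y t else 0 := by
        intro t
        by_cases h1 : t 0 = y
        · rw [if_pos h1]
        · rw [if_neg h1]
          by_cases h2 : (∀ i, t i ∉ C)
          · rw [if_pos h2, wtg, if_neg h1, zero_mul]
          · rw [if_neg h2]
      exact Finset.sum_congr rfl fun t _ => h2 t

end Stmt8Aux
namespace Stmt8Aux

variable {S : Type*} [Fintype S] [DecidableEq S]

lemma noHit_eq (C : Finset S) (n : ℕ) :
    noHit C n = ⋃ g ∈ Finset.univ.filter (fun g : Fin (n+1) → S => ∀ i, g i ∉ C), cylg n g := by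
  ext ω
  constructor
  · intro hω
    have hg : (fun i : Fin (n+1) => ω i) ∈
        Finset.univ.filter (fun g : Fin (n+1) → S => ∀ i, g i ∉ C) := by
      rw [Finset.mem_filter]
      exact ⟨Finset.mem_univ _, fun i => hω i (Nat.lt_succ_iff.mp i.2)⟩
    exact Set.mem_iUnion₂.mpr ⟨_, hg, mem_cylg_self n ω⟩
  · intro hω
    obtain ⟨g, hg, hmem⟩ := Set.mem_iUnion₂.mp hω
    rw [Finset.mem_filter] at hg
    intro k hk
    rw [cylg_val hmem hk]
    exact hg.2 _

lemma noHit_compl_subset (C : Finset S) (n : ℕ) :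
    (noHit C n)ᶜ ⊆
      ⋃ g ∈ Finset.univ.filter (fun g : Fin (n+1) → S => ¬ ∀ i, g i ∉ C), cylg n g := by
  intro ω hω
  simp only [noHit, Set.mem_compl_iff, Set.mem_setOf_eq, not_forall] at hω
  obtain ⟨k, hk, hkC⟩ := hω
  have hg : (fun i : Fin (n+1) => ω i) ∈
      Finset.univ.filter (fun g : Fin (n+1) → S => ¬ ∀ i, g i ∉ C) := by
    rw [Finset.mem_filter]
    refine ⟨Finset.mem_univ _, ?_⟩
    push_neg
    refine ⟨⟨k, Nat.lt_succ_of_le hk⟩, ?_⟩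
    simpa using hkC
  exact Set.mem_iUnion₂.mpr ⟨_, hg, mem_cylg_self n ω⟩

section Meas

variable [MeasurableSpace S] {K : S → S → ℝ≥0∞} {P : S → Measure (ℕ → S)}

lemma P_noHit (hK : IsStochastic K) (hMC : IsMarkovChain K P) (C : Finset S) (x : S) (n : ℕ) :
    P x (noHit C n) = av K C n x := by
  classical
  have htot : ∑ g : Fin (n+1) → S, wtg K x g = 1 := by
    have h := sum_wtg hK (∅ : Finset S) n x
    have h2 : ∀ n x, av K (∅ : Finset S) n x = 1 := by
      intro m
      induction m with
      | zero => intro y; simp [av_zero_def]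
      | succ m ih => intro y; rw [av_succ_def]; simp [ih, hK y]
    rw [h2 n x] at h
    rw [← h]
    exact Finset.sum_congr rfl fun g _ => by simp
  have hsplit := Finset.sum_filter_add_sum_filter_not Finset.univ
    (fun g : Fin (n+1) → S => ∀ i, g i ∉ C) (fun g => wtg K x g)
  have havsum : ∑ g ∈ Finset.univ.filter (fun g : Fin (n+1) → S => ∀ i, g i ∉ C),
      wtg K x g = av K C n x := by
    rw [Finset.sum_filter]
    exact sum_wtg hK C n x
  have hhitsum : ∑ g ∈ Finset.univ.filter (fun g : Fin (n+1) → S => ¬ ∀ i, g i ∉ C),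
      wtg K x g = 1 - av K C n x := by
    rw [htot, havsum] at hsplit
    exact ENNReal.eq_sub_of_add_eq (ne_top_of_le_ne_top one_ne_top (av_le_one hK C n x)) (by rw [add_comm]; exact hsplit)
  have hub : P x (noHit C n) ≤ av K C n x := by
    rw [noHit_eq C n, ← havsum]
    exact measure_biUnion_finset_le _ _ |>.trans
      (Finset.sum_le_sum fun g hg => le_of_eq (P_cylg hMC x n g))
  have hlb : av K C n x ≤ P x (noHit C n) := by
    have hP1 : P x Set.univ = 1 := (hMC.1 x).measure_univ
    have hcov : (1 : ℝ≥0∞) ≤ P x (noHit C n) + P x ((noHit C n)ᶜ) := by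
      rw [← hP1]
      have : (Set.univ : Set (ℕ → S)) = noHit C n ∪ (noHit C n)ᶜ := by
        rw [Set.union_compl_self]
      rw [this]
      exact measure_union_le _ _
    have hcompl : P x ((noHit C n)ᶜ) ≤ 1 - av K C n x := by
      rw [← hhitsum]
      refine le_trans (measure_mono (noHit_compl_subset C n)) ?_
      exact measure_biUnion_finset_le _ _ |>.trans
        (Finset.sum_le_sum fun g hg => le_of_eq (P_cylg hMC x n g))
    have h2 : 1 - (1 - av K C n x) ≤ P x (noHit C n) := by
      rw [tsub_le_iff_right]
      calc (1:ℝ≥0∞) ≤ P x (noHit C n) + P x ((noHit C n)ᶜ) := hcov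
        _ ≤ P x (noHit C n) + (1 - av K C n x) := add_le_add_right hcompl _
    rwa [ENNReal.sub_sub_cancel one_ne_top (av_le_one hK C n x)] at h2
  exact le_antisymm hub hlb

lemma expHit_eq_eH (hK : IsStochastic K) (hMC : IsMarkovChain K P) (C : Finset S) (x : S) :
    expHit P x C = eH K C x := by
  rw [expHit, eH]
  exact tsum_congr fun n => P_noHit hK hMC C x n

end Meas

end Stmt8Aux
namespace Stmt8Aux

variable {S : Type*} [Fintype S] [DecidableEq S]

/-- phase update: after leaving state `x` with phase `p` the phase becomes `phase A B x p`. -/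
def phase (A B : Finset S) (x : S) (p : Bool) : Bool :=
  if x ∈ A then false else if x ∈ B then true else p

/-- lifted kernel on `S × Bool` -/
noncomputable def Kh (K : S → S → ℝ≥0∞) (A B : Finset S) :
    S × Bool → S × Bool → ℝ≥0∞ :=
  fun u v => K u.1 v.1 * (if v.2 = phase A B u.1 u.2 then 1 else 0)

/-- the regeneration set: at `B` with phase `false` -/
def Ch (B : Finset S) : Finset (S × Bool) := B ×ˢ {false}

/-- the occupation set: at `A` -/
def Dh (A : Finset S) : Finset (S × Bool) := A ×ˢ Finset.univ

lemma mem_Ch {B : Finset S} {u : S × Bool} : u ∈ Ch B ↔ u.1 ∈ B ∧ u.2 = false := by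
  rw [Ch, Finset.mem_product, Finset.mem_singleton]

lemma mem_Dh {A : Finset S} {u : S × Bool} : u ∈ Dh A ↔ u.1 ∈ A := by
  rw [Dh, Finset.mem_product]
  simp

lemma Kh_stochastic {K : S → S → ℝ≥0∞} (hK : IsStochastic K) (A B : Finset S) :
    IsStochastic (Kh K A B) := by
  intro u
  rw [Fintype.sum_prod_type]
  have : ∀ y : S, ∑ q : Bool, Kh K A B u (y, q) = K u.1 y := by
    intro y
    rw [Fintype.sum_bool]
    unfold Kh
    cases h : phase A B u.1 u.2 <;> simp [h]
  rw [Finset.sum_congr rfl fun y _ => this y]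
  exact hK u.1

lemma sum_Kh {K : S → S → ℝ≥0∞} {A B : Finset S} (u : S × Bool) (f : S × Bool → ℝ≥0∞) :
    ∑ v, Kh K A B u v * f v = ∑ y, K u.1 y * f (y, phase A B u.1 u.2) := by
  rw [Fintype.sum_prod_type]
  refine Finset.sum_congr rfl fun y _ => ?_
  rw [Fintype.sum_bool]
  unfold Kh
  cases h : phase A B u.1 u.2 <;> simp [h]

lemma avKh_succ {K : S → S → ℝ≥0∞} {A B : Finset S} (n : ℕ) (x : S) (p : Bool) :
    av (Kh K A B) (Ch B) (n+1) (x, p) =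
      if x ∈ B ∧ p = false then 0
      else ∑ y, K x y * av (Kh K A B) (Ch B) n (y, phase A B x p) := by
  rw [av_succ_def]
  by_cases h : (x, p) ∈ Ch B
  · rw [if_pos h, if_pos (mem_Ch.mp h)]
  · rw [if_neg h, if_neg (fun hc => h (mem_Ch.mpr hc)), sum_Kh]

lemma ocKh_succ {K : S → S → ℝ≥0∞} {A B : Finset S} (n : ℕ) (x : S) (p : Bool) :
    oc (Kh K A B) (Ch B) (Dh A) (n+1) (x, p) =
      if x ∈ B ∧ p = false then 0
      else ∑ y, K x y * oc (Kh K A B) (Ch B) (Dh A) n (y, phase A B x p) := by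
  rw [oc_succ_def]
  by_cases h : (x, p) ∈ Ch B
  · rw [if_pos h, if_pos (mem_Ch.mp h)]
  · rw [if_neg h, if_neg (fun hc => h (mem_Ch.mpr hc)), sum_Kh]

section MainAlg

variable {K : S → S → ℝ≥0∞} {π : S → ℝ≥0∞} {A B : Finset S}

/-- the marginal chain -/
noncomputable def muC (K : S → S → ℝ≥0∞) (A B : Finset S) (π : S → ℝ≥0∞) :
    ℕ → S × Bool → ℝ≥0∞
  | 0 => fun u => if u.2 = false then π u.1 else 0
  | n+1 => fun v => ∑ u, muC K A B π n u * Kh K A B u v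

lemma muC_succ_def (n : ℕ) (v : S × Bool) :
    muC K A B π (n+1) v = ∑ u, muC K A B π n u * Kh K A B u v := rfl

lemma muC_marg (hstat : IsStationaryDistrib K π) :
    ∀ (n : ℕ) (x : S), muC K A B π n (x, false) + muC K A B π n (x, true) = π x := by
  intro n
  induction n with
  | zero => intro x; simp [muC]
  | succ n ih =>
    intro x
    rw [muC_succ_def, muC_succ_def, ← Finset.sum_add_distrib]
    have h1 : ∀ u : S × Bool,
        muC K A B π n u * Kh K A B u (x, false) + muC K A B π n u * Kh K A B u (x, true)
        = muC K A B π n u * K u.1 x := by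
      intro u
      rw [← mul_add]
      congr 1
      unfold Kh
      cases h : phase A B u.1 u.2 <;> simp [h]
    rw [Finset.sum_congr rfl fun u _ => h1 u, Fintype.sum_prod_type]
    have h2 : ∀ y : S, (∑ q : Bool, muC K A B π n (y, q) * K y x) = π y * K y x := by
      intro y
      rw [Fintype.sum_bool, ← add_mul, add_comm, ih y]
    rw [Finset.sum_congr rfl fun y _ => h2 y]
    exact hstat.2 x

lemma muC_mass (hstat : IsStationaryDistrib K π) (n : ℕ) :
    ∑ u, muC K A B π n u = 1 := by
  rw [Fintype.sum_prod_type]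
  have : ∀ y : S, (∑ q : Bool, muC K A B π n (y, q)) = π y := by
    intro y
    rw [Fintype.sum_bool, add_comm]
    exact muC_marg hstat n y
  rw [Finset.sum_congr rfl fun y _ => this y]
  exact hstat.1

lemma muC_pair (n : ℕ) (f : S × Bool → ℝ≥0∞) :
    ∑ u, muC K A B π n u * (∑ v, Kh K A B u v * f v) = ∑ v, muC K A B π (n+1) v * f v := by
  have h1 : ∀ u, muC K A B π n u * (∑ v, Kh K A B u v * f v)
      = ∑ v, muC K A B π n u * Kh K A B u v * f v := by
    intro u
    rw [Finset.mul_sum]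
    exact Finset.sum_congr rfl fun v _ => (mul_assoc _ _ _).symm
  rw [Finset.sum_congr rfl fun u _ => h1 u, Finset.sum_comm]
  refine Finset.sum_congr rfl fun v _ => ?_
  rw [muC_succ_def, Finset.sum_mul]

lemma muC_Dh (hstat : IsStationaryDistrib K π) (n : ℕ) :
    ∑ u, muC K A B π n u * (if u ∈ Dh A then 1 else 0) = ∑ x ∈ A, π x := by
  rw [Fintype.sum_prod_type]
  have h1 : ∀ y : S, (∑ q : Bool, muC K A B π n (y, q) * (if (y, q) ∈ Dh A then 1 else 0))
      = if y ∈ A then π y else 0 := by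
    intro y
    rw [Fintype.sum_bool]
    by_cases hy : y ∈ A
    · simp only [mem_Dh, hy, if_true, mul_one]
      rw [add_comm]
      exact muC_marg hstat n y
    · simp [mem_Dh, hy]
  rw [Finset.sum_congr rfl fun y _ => h1 y]
  rw [Finset.sum_ite_mem]
  simp

end MainAlg

end Stmt8Aux
namespace Stmt8Aux

variable {S : Type*} [Fintype S] [DecidableEq S]

section Bounds

variable {K : S → S → ℝ≥0∞} {A B : Finset S}

lemma phase_false_of_not_mem {x : S} (hx : x ∉ B) : phase A B x false = false := by
  unfold phase
  by_cases hA : x ∈ A <;> simp [hA, hx]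

lemma phase_false_of_mem {x : S} (hdis : ∀ a ∈ A, a ∉ B) (hx : x ∈ B) :
    phase A B x false = true := by
  have hxA : x ∉ A := fun h => hdis x h hx
  unfold phase
  simp [hxA, hx]

lemma phase_true_of_mem {x : S} (hx : x ∈ A) : phase A B x true = false := by
  unfold phase; simp [hx]

lemma phase_true_of_not_mem {x : S} (hx : x ∉ A) : phase A B x true = true := by
  unfold phase
  by_cases hB : x ∈ B <;> simp [hx, hB]

lemma not_mem_Ch_true (x : S) : (x, true) ∉ Ch B := by
  rw [mem_Ch]; simp

/-- supersolution bound for the lifted hitting truncations -/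
lemma avKh_partial_le (hK : IsStochastic K) (hdis : ∀ a ∈ A, a ∉ B) (M' : ℝ≥0∞)
    (hM : ∀ a ∈ A, eH K B a ≤ M') :
    ∀ (N : ℕ) (x : S),
      (∑ n ∈ Finset.range N, av (Kh K A B) (Ch B) n (x, false)) ≤ eH K B x ∧
      (∑ n ∈ Finset.range N, av (Kh K A B) (Ch B) n (x, true)) ≤ eH K A x + M' := by
  intro N
  induction N with
  | zero => intro x; simp
  | succ N ih =>
    intro x
    constructor
    · by_cases hxB : x ∈ B
      · have h0 : ∀ n, av (Kh K A B) (Ch B) n (x, false) = 0 :=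
          fun n => av_of_mem (mem_Ch.mpr ⟨hxB, rfl⟩) n
        simp [h0]
      · rw [Finset.sum_range_succ']
        have hstep : ∀ n, av (Kh K A B) (Ch B) (n+1) (x, false)
            = ∑ y, K x y * av (Kh K A B) (Ch B) n (y, false) := by
          intro n
          rw [avKh_succ, if_neg (by simp [hxB]), phase_false_of_not_mem hxB]
        rw [Finset.sum_congr rfl fun n _ => hstep n, Finset.sum_comm]
        have h1 : ∀ y, (∑ n ∈ Finset.range N, K x y * av (Kh K A B) (Ch B) n (y, false))
            ≤ K x y * eH K B y := by
          intro y
          rw [← Finset.mul_sum]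
          exact mul_le_mul_right (ih y).1 _
        have h0 : av (Kh K A B) (Ch B) 0 (x, false) = 1 := by
          rw [av_zero_def, if_neg (by rw [mem_Ch]; simp [hxB])]
        rw [h0, eH_of_not_mem hxB, add_comm]
        exact add_le_add_right (le_trans (Finset.sum_le_sum fun y _ => h1 y) le_rfl) 1
    · rw [Finset.sum_range_succ']
      have h0 : av (Kh K A B) (Ch B) 0 (x, true) = 1 := by
        rw [av_zero_def, if_neg (not_mem_Ch_true x)]
      rw [h0]
      by_cases hxA : x ∈ A
      · have hxB : x ∉ B := hdis x hxA
        have hstep : ∀ n, av (Kh K A B) (Ch B) (n+1) (x, true)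
            = ∑ y, K x y * av (Kh K A B) (Ch B) n (y, false) := by
          intro n
          rw [avKh_succ, if_neg (by simp), phase_true_of_mem hxA]
        rw [Finset.sum_congr rfl fun n _ => hstep n, Finset.sum_comm]
        have h1 : (∑ y, ∑ n ∈ Finset.range N, K x y * av (Kh K A B) (Ch B) n (y, false))
            ≤ ∑ y, K x y * eH K B y := by
          refine Finset.sum_le_sum fun y _ => ?_
          rw [← Finset.mul_sum]
          exact mul_le_mul_right (ih y).1 _
        have h2 : (∑ y, ∑ n ∈ Finset.range N, K x y * av (Kh K A B) (Ch B) n (y, false)) + 1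
            ≤ eH K B x := by
          rw [eH_of_not_mem hxB, add_comm]
          exact add_le_add_right h1 1
        calc (∑ y, ∑ n ∈ Finset.range N, K x y * av (Kh K A B) (Ch B) n (y, false)) + 1
            ≤ eH K B x := h2
          _ ≤ M' := hM x hxA
          _ ≤ eH K A x + M' := le_add_self
      · have hstep : ∀ n, av (Kh K A B) (Ch B) (n+1) (x, true)
            = ∑ y, K x y * av (Kh K A B) (Ch B) n (y, true) := by
          intro n
          rw [avKh_succ, if_neg (by simp), phase_true_of_not_mem hxA]
        rw [Finset.sum_congr rfl fun n _ => hstep n, Finset.sum_comm]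
        have h1 : (∑ y, ∑ n ∈ Finset.range N, K x y * av (Kh K A B) (Ch B) n (y, true))
            ≤ ∑ y, K x y * (eH K A y + M') := by
          refine Finset.sum_le_sum fun y _ => ?_
          rw [← Finset.mul_sum]
          exact mul_le_mul_right (ih y).2 _
        have h2 : ∑ y, K x y * (eH K A y + M') = (∑ y, K x y * eH K A y) + M' := by
          have : ∀ y, K x y * (eH K A y + M') = K x y * eH K A y + K x y * M' := by
            intro y; rw [mul_add]
          rw [Finset.sum_congr rfl fun y _ => this y, Finset.sum_add_distrib,
            ← Finset.sum_mul, hK x, one_mul]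
        calc (∑ y, ∑ n ∈ Finset.range N, K x y * av (Kh K A B) (Ch B) n (y, true)) + 1
            ≤ (∑ y, K x y * eH K A y + M') + 1 := by rw [← h2]; exact add_le_add_left h1 1
          _ = (1 + ∑ y, K x y * eH K A y) + M' := by ring
          _ = eH K A x + M' := by rw [← eH_of_not_mem hxA]

lemma hHat_false_le (hK : IsStochastic K) (hdis : ∀ a ∈ A, a ∉ B) (M' : ℝ≥0∞)
    (hM : ∀ a ∈ A, eH K B a ≤ M') (x : S) :
    eH (Kh K A B) (Ch B) (x, false) ≤ eH K B x := by
  rw [eH_eq_iSup]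
  exact iSup_le fun N => (avKh_partial_le hK hdis M' hM N x).1

lemma hHat_true_le (hK : IsStochastic K) (hdis : ∀ a ∈ A, a ∉ B) (M' : ℝ≥0∞)
    (hM : ∀ a ∈ A, eH K B a ≤ M') (x : S) :
    eH (Kh K A B) (Ch B) (x, true) ≤ eH K A x + M' := by
  rw [eH_eq_iSup]
  exact iSup_le fun N => (avKh_partial_le hK hdis M' hM N x).2

lemma av_le_avKh_true : ∀ (n : ℕ) (x : S),
    av K A n x ≤ av (Kh K A B) (Ch B) n (x, true) := by
  intro n
  induction n with
  | zero =>
    intro x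
    rw [av_zero_def, av_zero_def, if_neg (not_mem_Ch_true x)]
    split <;> simp
  | succ n ih =>
    intro x
    by_cases hxA : x ∈ A
    · rw [av_of_mem hxA]; exact zero_le
    · rw [av_succ_def, if_neg hxA, avKh_succ, if_neg (by simp), phase_true_of_not_mem hxA]
      exact Finset.sum_le_sum fun y _ => mul_le_mul_right (ih y) _

lemma eH_A_le_hHat_true (x : S) :
    eH K A x ≤ eH (Kh K A B) (Ch B) (x, true) :=
  ENNReal.tsum_le_tsum fun n => av_le_avKh_true n x

/-- supersolution bound for the lifted occupation truncations -/
lemma ocKh_partial_le (hK : IsStochastic K) (hdis : ∀ a ∈ A, a ∉ B) (M' : ℝ≥0∞)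
    (hM : ∀ a ∈ A, eH K B a ≤ M') :
    ∀ (N : ℕ) (x : S),
      (∑ n ∈ Finset.range N, oc (Kh K A B) (Ch B) (Dh A) n (x, false)) ≤ eH K B x ∧
      (∑ n ∈ Finset.range N, oc (Kh K A B) (Ch B) (Dh A) n (x, true)) ≤ M' := by
  intro N
  induction N with
  | zero => intro x; simp
  | succ N ih =>
    intro x
    constructor
    · by_cases hxB : x ∈ B
      · have h0 : ∀ n, oc (Kh K A B) (Ch B) (Dh A) n (x, false) = 0 :=
          fun n => oc_of_mem (mem_Ch.mpr ⟨hxB, rfl⟩) n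
        simp [h0]
      · rw [Finset.sum_range_succ']
        have hstep : ∀ n, oc (Kh K A B) (Ch B) (Dh A) (n+1) (x, false)
            = ∑ y, K x y * oc (Kh K A B) (Ch B) (Dh A) n (y, false) := by
          intro n
          rw [ocKh_succ, if_neg (by simp [hxB]), phase_false_of_not_mem hxB]
        rw [Finset.sum_congr rfl fun n _ => hstep n, Finset.sum_comm]
        have h1 : (∑ y, ∑ n ∈ Finset.range N, K x y * oc (Kh K A B) (Ch B) (Dh A) n (y, false))
            ≤ ∑ y, K x y * eH K B y := by
          refine Finset.sum_le_sum fun y _ => ?_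
          rw [← Finset.mul_sum]
          exact mul_le_mul_right (ih y).1 _
        have h0 : oc (Kh K A B) (Ch B) (Dh A) 0 (x, false) ≤ 1 := by
          rw [oc_zero_def]; split; · exact zero_le
          split <;> simp
        calc (∑ y, ∑ n ∈ Finset.range N, K x y * oc (Kh K A B) (Ch B) (Dh A) n (y, false))
              + oc (Kh K A B) (Ch B) (Dh A) 0 (x, false)
            ≤ (∑ y, K x y * eH K B y) + 1 := add_le_add h1 h0
          _ = eH K B x := by rw [eH_of_not_mem hxB, add_comm]
    · rw [Finset.sum_range_succ']
      have h0 : oc (Kh K A B) (Ch B) (Dh A) 0 (x, true)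
          = if x ∈ A then 1 else 0 := by
        rw [oc_zero_def, if_neg (not_mem_Ch_true x)]
        by_cases hxA : x ∈ A <;> simp [mem_Dh, hxA]
      by_cases hxA : x ∈ A
      · have hxB : x ∉ B := hdis x hxA
        have hstep : ∀ n, oc (Kh K A B) (Ch B) (Dh A) (n+1) (x, true)
            = ∑ y, K x y * oc (Kh K A B) (Ch B) (Dh A) n (y, false) := by
          intro n
          rw [ocKh_succ, if_neg (by simp), phase_true_of_mem hxA]
        rw [h0, if_pos hxA, Finset.sum_congr rfl fun n _ => hstep n, Finset.sum_comm]
        have h1 : (∑ y, ∑ n ∈ Finset.range N, K x y * oc (Kh K A B) (Ch B) (Dh A) n (y, false))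
            ≤ ∑ y, K x y * eH K B y := by
          refine Finset.sum_le_sum fun y _ => ?_
          rw [← Finset.mul_sum]
          exact mul_le_mul_right (ih y).1 _
        calc (∑ y, ∑ n ∈ Finset.range N, K x y * oc (Kh K A B) (Ch B) (Dh A) n (y, false)) + 1
            ≤ (∑ y, K x y * eH K B y) + 1 := add_le_add_left h1 1
          _ = eH K B x := by rw [eH_of_not_mem hxB, add_comm]
          _ ≤ M' := hM x hxA
      · have hstep : ∀ n, oc (Kh K A B) (Ch B) (Dh A) (n+1) (x, true)
            = ∑ y, K x y * oc (Kh K A B) (Ch B) (Dh A) n (y, true) := by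
          intro n
          rw [ocKh_succ, if_neg (by simp), phase_true_of_not_mem hxA]
        rw [h0, if_neg hxA, Finset.sum_congr rfl fun n _ => hstep n, Finset.sum_comm, add_zero]
        calc (∑ y, ∑ n ∈ Finset.range N, K x y * oc (Kh K A B) (Ch B) (Dh A) n (y, true))
            ≤ ∑ y, K x y * M' := by
              refine Finset.sum_le_sum fun y _ => ?_
              rw [← Finset.mul_sum]
              exact mul_le_mul_right (ih y).2 _
          _ = M' := by rw [← Finset.sum_mul, hK x, one_mul]

lemma gHat_false_le (hK : IsStochastic K) (hdis : ∀ a ∈ A, a ∉ B) (M' : ℝ≥0∞)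
    (hM : ∀ a ∈ A, eH K B a ≤ M') (x : S) :
    gH (Kh K A B) (Ch B) (Dh A) (x, false) ≤ eH K B x := by
  rw [gH, ENNReal.tsum_eq_iSup_nat]
  exact iSup_le fun N => (ocKh_partial_le hK hdis M' hM N x).1

lemma gHat_true_le (hK : IsStochastic K) (hdis : ∀ a ∈ A, a ∉ B) (M' : ℝ≥0∞)
    (hM : ∀ a ∈ A, eH K B a ≤ M') (x : S) :
    gH (Kh K A B) (Ch B) (Dh A) (x, true) ≤ M' := by
  rw [gH, ENNReal.tsum_eq_iSup_nat]
  exact iSup_le fun N => (ocKh_partial_le hK hdis M' hM N x).2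

end Bounds

end Stmt8Aux
namespace Stmt8Aux

variable {S : Type*} [Fintype S] [DecidableEq S]

lemma main_alg (K : S → S → ℝ≥0∞) (π : S → ℝ≥0∞)
    (hK : IsStochastic K) (hirr : IsIrreducibleKernel K) (hstat : IsStationaryDistrib K π)
    (A B : Finset S) (hA : A.Nonempty) (hB : B.Nonempty) :
    (∑ x ∈ A, π x) * (⨅ x ∈ B, eH K A x) ≤ ⨆ x ∈ A, eH K B x := by
  classical
  by_cases hdis : ∀ a ∈ A, a ∉ B
  case neg =>
    push_neg at hdis
    obtain ⟨c, hcA, hcB⟩ := hdis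
    have h0 : (⨅ x ∈ B, eH K A x) = 0 :=
      le_antisymm (le_trans (iInf₂_le c hcB) (le_of_eq (eH_of_mem hcA))) (zero_le)
    rw [h0, mul_zero]
    exact zero_le
  case pos =>
    set πA : ℝ≥0∞ := ∑ x ∈ A, π x with hπA
    set m : ℝ≥0∞ := ⨅ x ∈ B, eH K A x with hm
    set M' : ℝ≥0∞ := ⨆ x ∈ A, eH K B x with hM'
    have hM : ∀ a ∈ A, eH K B a ≤ M' := by
      intro a ha
      rw [hM']
      exact le_iSup₂ (f := fun x (_ : x ∈ A) => eH K B x) a ha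
    have hfinB : ∀ x, eH K B x < ⊤ := fun x => eH_lt_top hK hirr hB x
    have hfinA : ∀ x, eH K A x < ⊤ := fun x => eH_lt_top hK hirr hA x
    have hM'top : M' ≠ ⊤ := by
      have h1 : M' ≤ Finset.univ.sup (fun x => eH K B x) := by
        rw [hM']
        exact iSup₂_le fun x _ => Finset.le_sup (Finset.mem_univ x)
      have h2 : Finset.univ.sup (fun x => eH K B x) < ⊤ := by
        rw [Finset.sup_lt_iff (by simp : (⊥ : ℝ≥0∞) < ⊤)]
        exact fun x _ => hfinB x
      exact (lt_of_le_of_lt h1 h2).ne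
    have hmle : ∀ b ∈ B, m ≤ eH K A b := by
      intro b hb
      rw [hm]
      exact iInf₂_le (f := fun x (_ : x ∈ B) => eH K A x) b hb
    have hmtop : m ≠ ⊤ :=
      (lt_of_le_of_lt (hmle hB.choose hB.choose_spec) (hfinA hB.choose)).ne
    -- global bound for lifted functions
    set HB : ℝ≥0∞ := Finset.univ.sup (fun x => eH K B x)
      + (Finset.univ.sup (fun x => eH K A x) + M') with hHB
    have hHBtop : HB ≠ ⊤ := by
      have h1 : Finset.univ.sup (fun x => eH K B x) < ⊤ := by
        rw [Finset.sup_lt_iff (by simp : (⊥ : ℝ≥0∞) < ⊤)]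
        exact fun x _ => hfinB x
      have h2 : Finset.univ.sup (fun x => eH K A x) < ⊤ := by
        rw [Finset.sup_lt_iff (by simp : (⊥ : ℝ≥0∞) < ⊤)]
        exact fun x _ => hfinA x
      rw [hHB]
      exact (ENNReal.add_lt_top.mpr ⟨h1, ENNReal.add_lt_top.mpr
        ⟨h2, lt_top_iff_ne_top.mpr hM'top⟩⟩).ne
    have hhle : ∀ u, eH (Kh K A B) (Ch B) u ≤ HB := by
      rintro ⟨x, p⟩
      cases p
      · refine le_trans (hHat_false_le hK hdis M' hM x) ?_
        exact le_trans (Finset.le_sup (Finset.mem_univ x)) le_self_add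
      · refine le_trans (hHat_true_le hK hdis M' hM x) ?_
        rw [hHB]
        exact le_add_left (add_le_add_left (Finset.le_sup (Finset.mem_univ x)) M')
    have hgle : ∀ u, gH (Kh K A B) (Ch B) (Dh A) u ≤ HB := by
      rintro ⟨x, p⟩
      cases p
      · refine le_trans (gHat_false_le hK hdis M' hM x) ?_
        exact le_trans (Finset.le_sup (Finset.mem_univ x)) le_self_add
      · refine le_trans (gHat_true_le hK hdis M' hM x) ?_
        rw [hHB]
        exact le_add_left (le_add_left le_rfl)
    -- the two "boundary" functions
    set Rh : S × Bool → ℝ≥0∞ := fun u =>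
      if u ∈ Ch B then 1 + ∑ v, Kh K A B u v * eH (Kh K A B) (Ch B) v else 0 with hRh
    set Rg : S × Bool → ℝ≥0∞ := fun u =>
      if u ∈ Ch B then ∑ v, Kh K A B u v * gH (Kh K A B) (Ch B) (Dh A) v else 0 with hRg
    have hIdH : ∀ u, eH (Kh K A B) (Ch B) u + Rh u
        = 1 + ∑ v, Kh K A B u v * eH (Kh K A B) (Ch B) v := by
      intro u
      by_cases h : u ∈ Ch B
      · rw [hRh]; simp only [if_pos h]
        rw [eH_of_mem h, zero_add]
      · rw [hRh]; simp only [if_neg h]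
        rw [add_zero]
        exact eH_of_not_mem h
    have hIdG : ∀ u, gH (Kh K A B) (Ch B) (Dh A) u + Rg u
        = (if u ∈ Dh A then 1 else 0) + ∑ v, Kh K A B u v * gH (Kh K A B) (Ch B) (Dh A) v := by
      intro u
      by_cases h : u ∈ Ch B
      · rw [hRg]; simp only [if_pos h]
        rw [gH_of_mem h, zero_add]
        have hD : u ∉ Dh A := by
          rw [mem_Dh]
          exact fun hu => hdis u.1 hu (mem_Ch.mp h).1
        rw [if_neg hD, zero_add]
      · rw [hRg]; simp only [if_neg h]
        rw [add_zero]
        exact gH_of_not_mem h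
    have hRh_ge : ∀ u ∈ Ch B, m ≤ Rh u := by
      rintro ⟨b, p⟩ hu
      obtain ⟨hbB, hp⟩ := mem_Ch.mp hu
      simp only at hp
      subst hp
      have hbA : b ∉ A := fun h => hdis b h hbB
      rw [hRh]; simp only [if_pos hu]
      rw [sum_Kh, phase_false_of_mem hdis hbB]
      have h1 : eH K A b ≤ 1 + ∑ y, K b y * eH (Kh K A B) (Ch B) (y, true) := by
        rw [eH_of_not_mem hbA]
        refine add_le_add_right (Finset.sum_le_sum fun y _ => ?_) 1
        exact mul_le_mul_right (eH_A_le_hHat_true y) _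
      exact le_trans (hmle b hbB) h1
    have hRg_le : ∀ u ∈ Ch B, Rg u ≤ M' := by
      rintro ⟨b, p⟩ hu
      obtain ⟨hbB, hp⟩ := mem_Ch.mp hu
      simp only at hp
      subst hp
      rw [hRg]; simp only [if_pos hu]
      rw [sum_Kh, phase_false_of_mem hdis hbB]
      calc ∑ y, K b y * gH (Kh K A B) (Ch B) (Dh A) (y, true)
          ≤ ∑ y, K b y * M' :=
            Finset.sum_le_sum fun y _ => mul_le_mul_right (gHat_true_le hK hdis M' hM y) _
        _ = M' := by rw [← Finset.sum_mul, hK b, one_mul]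
    -- telescoping identities
    have hT1 : ∀ n, (∑ u, muC K A B π n u * eH (Kh K A B) (Ch B) u)
        + (∑ u, muC K A B π n u * Rh u)
        = 1 + ∑ u, muC K A B π (n+1) u * eH (Kh K A B) (Ch B) u := by
      intro n
      rw [← Finset.sum_add_distrib]
      have h1 : ∀ u, muC K A B π n u * eH (Kh K A B) (Ch B) u + muC K A B π n u * Rh u
          = muC K A B π n u + muC K A B π n u *
            (∑ v, Kh K A B u v * eH (Kh K A B) (Ch B) v) := by
        intro u
        rw [← mul_add, hIdH u, mul_add, mul_one]
      rw [Finset.sum_congr rfl fun u _ => h1 u, Finset.sum_add_distrib, muC_mass hstat n,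
        muC_pair n (eH (Kh K A B) (Ch B))]
    have hT2 : ∀ n, (∑ u, muC K A B π n u * gH (Kh K A B) (Ch B) (Dh A) u)
        + (∑ u, muC K A B π n u * Rg u)
        = πA + ∑ u, muC K A B π (n+1) u * gH (Kh K A B) (Ch B) (Dh A) u := by
      intro n
      rw [← Finset.sum_add_distrib]
      have h1 : ∀ u, muC K A B π n u * gH (Kh K A B) (Ch B) (Dh A) u + muC K A B π n u * Rg u
          = muC K A B π n u * (if u ∈ Dh A then 1 else 0) + muC K A B π n u *
            (∑ v, Kh K A B u v * gH (Kh K A B) (Ch B) (Dh A) v) := by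
        intro u
        rw [← mul_add, hIdG u, mul_add]
      rw [Finset.sum_congr rfl fun u _ => h1 u, Finset.sum_add_distrib, muC_Dh hstat n,
        muC_pair n (gH (Kh K A B) (Ch B) (Dh A))]
    have hT1' : ∀ N : ℕ, (∑ u, muC K A B π 0 u * eH (Kh K A B) (Ch B) u)
        + ∑ n ∈ Finset.range N, (∑ u, muC K A B π n u * Rh u)
        = N + ∑ u, muC K A B π N u * eH (Kh K A B) (Ch B) u := by
      intro N
      induction N with
      | zero => simp
      | succ N ihN =>
        rw [Finset.sum_range_succ, ← add_assoc, ihN]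
        rw [add_assoc, hT1 N, Nat.cast_succ]
        ring
    have hT2' : ∀ N : ℕ, (∑ u, muC K A B π 0 u * gH (Kh K A B) (Ch B) (Dh A) u)
        + ∑ n ∈ Finset.range N, (∑ u, muC K A B π n u * Rg u)
        = N * πA + ∑ u, muC K A B π N u * gH (Kh K A B) (Ch B) (Dh A) u := by
      intro N
      induction N with
      | zero => simp
      | succ N ihN =>
        rw [Finset.sum_range_succ, ← add_assoc, ihN]
        rw [add_assoc, hT2 N, Nat.cast_succ]
        ring
    -- bounds on the paired sums
    have hAle : ∀ n, (∑ u, muC K A B π n u * eH (Kh K A B) (Ch B) u) ≤ HB := by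
      intro n
      calc ∑ u, muC K A B π n u * eH (Kh K A B) (Ch B) u
          ≤ ∑ u, muC K A B π n u * HB :=
            Finset.sum_le_sum fun u _ => mul_le_mul_right (hhle u) _
        _ = HB := by rw [← Finset.sum_mul, muC_mass hstat n, one_mul]
    have hGle : ∀ n, (∑ u, muC K A B π n u * gH (Kh K A B) (Ch B) (Dh A) u) ≤ HB := by
      intro n
      calc ∑ u, muC K A B π n u * gH (Kh K A B) (Ch B) (Dh A) u
          ≤ ∑ u, muC K A B π n u * HB :=
            Finset.sum_le_sum fun u _ => mul_le_mul_right (hgle u) _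
        _ = HB := by rw [← Finset.sum_mul, muC_mass hstat n, one_mul]
    have hBge : ∀ n, m * (∑ u, muC K A B π n u * (if u ∈ Ch B then 1 else 0))
        ≤ ∑ u, muC K A B π n u * Rh u := by
      intro n
      rw [Finset.mul_sum]
      refine Finset.sum_le_sum fun u _ => ?_
      by_cases h : u ∈ Ch B
      · rw [if_pos h, mul_one, mul_comm]
        exact mul_le_mul_right (hRh_ge u h) _
      · rw [if_neg h, mul_zero, mul_zero]
        exact zero_le
    have hEle : ∀ n, (∑ u, muC K A B π n u * Rg u)
        ≤ M' * (∑ u, muC K A B π n u * (if u ∈ Ch B then 1 else 0)) := by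
      intro n
      rw [Finset.mul_sum]
      refine Finset.sum_le_sum fun u _ => ?_
      by_cases h : u ∈ Ch B
      · rw [if_pos h, mul_one, mul_comm (M' : ℝ≥0∞)]
        exact mul_le_mul_right (hRg_le u h) _
      · rw [if_neg h, mul_zero, mul_zero]
        have : Rg u = 0 := by rw [hRg]; simp [h]
        rw [this, mul_zero]
    -- the key quantitative estimate
    have key : ∀ N : ℕ, (N : ℝ≥0∞) * (πA * m) ≤ (N : ℝ≥0∞) * M' + (HB * m + M' * HB) := by
      intro N
      set CC : ℝ≥0∞ := ∑ n ∈ Finset.range N, (∑ u, muC K A B π n u * (if u ∈ Ch B then 1 else 0))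
        with hCC
      have c1 : (N : ℝ≥0∞) * πA ≤ HB + M' * CC := by
        calc (N : ℝ≥0∞) * πA ≤ (N : ℝ≥0∞) * πA
              + ∑ u, muC K A B π N u * gH (Kh K A B) (Ch B) (Dh A) u := le_self_add
          _ = (∑ u, muC K A B π 0 u * gH (Kh K A B) (Ch B) (Dh A) u)
              + ∑ n ∈ Finset.range N, (∑ u, muC K A B π n u * Rg u) := (hT2' N).symm
          _ ≤ HB + ∑ n ∈ Finset.range N, M' *
              (∑ u, muC K A B π n u * (if u ∈ Ch B then 1 else 0)) :=
            add_le_add (hGle 0) (Finset.sum_le_sum fun n _ => hEle n)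
          _ = HB + M' * CC := by rw [hCC, Finset.mul_sum]
      have c2 : m * CC ≤ (N : ℝ≥0∞) + HB := by
        calc m * CC = ∑ n ∈ Finset.range N,
              m * (∑ u, muC K A B π n u * (if u ∈ Ch B then 1 else 0)) := by
              rw [hCC, Finset.mul_sum]
          _ ≤ ∑ n ∈ Finset.range N, (∑ u, muC K A B π n u * Rh u) :=
              Finset.sum_le_sum fun n _ => hBge n
          _ ≤ (∑ u, muC K A B π 0 u * eH (Kh K A B) (Ch B) u)
              + ∑ n ∈ Finset.range N, (∑ u, muC K A B π n u * Rh u) := le_add_self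
          _ = (N : ℝ≥0∞) + ∑ u, muC K A B π N u * eH (Kh K A B) (Ch B) u := hT1' N
          _ ≤ (N : ℝ≥0∞) + HB := add_le_add_right (hAle N) _
      calc (N : ℝ≥0∞) * (πA * m) = ((N : ℝ≥0∞) * πA) * m := by ring
        _ ≤ (HB + M' * CC) * m := mul_le_mul_left c1 m
        _ = HB * m + M' * (m * CC) := by ring
        _ ≤ HB * m + M' * ((N : ℝ≥0∞) + HB) := add_le_add_right (mul_le_mul_right c2 M') _
        _ = (N : ℝ≥0∞) * M' + (HB * m + M' * HB) := by ring
    -- conclude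
    by_contra hcon
    push_neg at hcon
    have hπA1 : πA ≤ 1 := by
      rw [hπA, ← hstat.1]
      exact Finset.sum_le_sum_of_subset A.subset_univ
    have httop : πA * m ≠ ⊤ := ENNReal.mul_ne_top (ne_top_of_le_ne_top one_ne_top hπA1) hmtop
    set d : ℝ≥0∞ := πA * m - M' with hd
    have hdpos : 0 < d := tsub_pos_iff_lt.mpr hcon
    have hsplit : πA * m = M' + d := (add_tsub_cancel_of_le hcon.le).symm
    set c : ℝ≥0∞ := HB * m + M' * HB with hc
    have hctop : c ≠ ⊤ :=
      ENNReal.add_ne_top.mpr ⟨ENNReal.mul_ne_top hHBtop hmtop, ENNReal.mul_ne_top hM'top hHBtop⟩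
    have hNd : ∀ N : ℕ, (N : ℝ≥0∞) * d ≤ c := by
      intro N
      have h1 := key N
      rw [hsplit, mul_add] at h1
      exact (ENNReal.add_le_add_iff_left (ENNReal.mul_ne_top (natCast_ne_top N) hM'top)).mp h1
    have htop : (⊤ : ℝ≥0∞) ≤ c := by
      have h2 : (⨆ N : ℕ, (N : ℝ≥0∞) * d) = ⊤ := by
        rw [← ENNReal.iSup_mul, iSup_natCast, ENNReal.top_mul hdpos.ne']
      rw [← h2]
      exact iSup_le hNd
    exact hctop (top_le_iff.mp htop)

end Stmt8Aux

/-- For an irreducible finite Markov chain with stationary distribution `π` and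
nonempty sets `A,B`: `π(A) · T⁻(B,A) ≤ T⁺(A,B)`. -/
theorem stmt_8 {S : Type*} [Fintype S] [DecidableEq S] [MeasurableSpace S]
    (K : S → S → ENNReal) (P : S → Measure (ℕ → S)) (π : S → ENNReal)
    (hK : IsStochastic K) (hMC : IsMarkovChain K P)
    (hirr : IsIrreducibleKernel K) (hstat : IsStationaryDistrib K π)
    (A B : Finset S) (hA : A.Nonempty) (hB : B.Nonempty) :
    (∑ x ∈ A, π x) * (⨅ x ∈ B, expHit P x A) ≤ ⨆ x ∈ A, expHit P x B := by
  have hconv : ∀ (x : S) (C : Finset S), expHit P x C = Stmt8Aux.eH K C x :=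
    fun x C => Stmt8Aux.expHit_eq_eH hK hMC C x
  calc (∑ x ∈ A, π x) * (⨅ x ∈ B, expHit P x A)
      = (∑ x ∈ A, π x) * (⨅ x ∈ B, Stmt8Aux.eH K A x) := by
        rw [iInf_congr fun x => iInf_congr fun _ => hconv x A]
    _ ≤ ⨆ x ∈ A, Stmt8Aux.eH K B x :=
        Stmt8Aux.main_alg K π hK hirr hstat A B hA hB
    _ = ⨆ x ∈ A, expHit P x B := by
        rw [iSup_congr fun x => iSup_congr fun _ => (hconv x B).symm]
end

section
/- Let (X_n) be an irreducible finite Markov chain with stationary distribution π. Suppose B = {x : T(x,A) > T(1/2)/π(A)} where T(x,A) = E_x[hitting time of A] and T(1/2) is the maximal worst-case expected hitting time over sets of stationary measure ≥ 1/2. Then π(B) ≤ 1/2. -/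
open MeasureTheory ENNReal

open Finset in
/-- Cauchy product for `ℝ≥0∞`. -/
lemma ennreal_cauchy (f g : ℕ → ℝ≥0∞) :
    ∑' n, ∑ k ∈ Finset.range (n+1), f k * g (n - k) = (∑' n, f n) * (∑' n, g n) := by
  have h1 : ∑' (p : ℕ × ℕ), f p.1 * g p.2 = (∑' n, f n) * (∑' n, g n) := by
    have := ENNReal.tsum_prod (f := fun k l => f k * g l)
    rw [this]
    rw [← ENNReal.tsum_mul_right]
    exact tsum_congr fun k => ENNReal.tsum_mul_left
  rw [← h1, ← Finset.HasAntidiagonal.sigmaAntidiagonalEquivProd.tsum_eq (fun p : ℕ × ℕ => f p.1 * g p.2)]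
  rw [ENNReal.tsum_sigma']
  refine tsum_congr fun n => ?_
  rw [← Nat.sum_antidiagonal_eq_sum_range_succ fun k l => f k * g l]
  rw [← Finset.sum_finset_coe, ← tsum_fintype (L := .unconditional _)]
  rfl


namespace MChain

open Finset

variable {S : Type*} [Fintype S] [DecidableEq S]

/-- survival: `sv K C n x = P_x(τ_C > n)` (no C-visit in `0..n`). -/
noncomputable def sv (K : S → S → ℝ≥0∞) (C : Finset S) : ℕ → S → ℝ≥0∞
  | 0 => fun x => if x ∈ C then 0 else 1
  | n+1 => fun x => if x ∈ C then 0 else ∑ y, K x y * sv K C n y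

/-- first passage: `fpv K C n x c = P_x(τ_C = n, X_n = c)`. -/
noncomputable def fpv (K : S → S → ℝ≥0∞) (C : Finset S) : ℕ → S → S → ℝ≥0∞
  | 0 => fun x c => if x ∈ C ∧ x = c then 1 else 0
  | n+1 => fun x c => if x ∈ C then 0 else ∑ y, K x y * fpv K C n y c

/-- `av K A n x = P_x(X_n ∈ A)`. -/
noncomputable def av (K : S → S → ℝ≥0∞) (A : Finset S) : ℕ → S → ℝ≥0∞
  | 0 => fun x => if x ∈ A then 1 else 0
  | n+1 => fun x => ∑ y, K x y * av K A n y

/-- `uvv K A C n x = P_x(X_n ∈ A, τ_C > n)`. -/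
noncomputable def uvv (K : S → S → ℝ≥0∞) (A C : Finset S) : ℕ → S → ℝ≥0∞
  | 0 => fun x => if x ∈ C then 0 else if x ∈ A then 1 else 0
  | n+1 => fun x => if x ∈ C then 0 else ∑ y, K x y * uvv K A C n y

variable {K : S → S → ℝ≥0∞} {A B C : Finset S} {π : S → ℝ≥0∞} {x c : S}

lemma av_le_one (hK : IsStochastic K) : ∀ n x, av K A n x ≤ 1 := by
  intro n
  induction n with
  | zero => intro x; simp only [av]; split <;> simp
  | succ n ih =>
    intro x
    calc ∑ y, K x y * av K A n y ≤ ∑ y, K x y * 1 :=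
          Finset.sum_le_sum fun y _ => mul_le_mul_right (ih y) _
      _ = 1 := by simp [hK x]

lemma sv_le_one (hK : IsStochastic K) : ∀ n x, sv K C n x ≤ 1 := by
  intro n
  induction n with
  | zero => intro x; simp only [sv]; split <;> simp
  | succ n ih =>
    intro x
    simp only [sv]
    split
    · simp
    · calc ∑ y, K x y * sv K C n y ≤ ∑ y, K x y * 1 :=
            Finset.sum_le_sum fun y _ => mul_le_mul_right (ih y) _
        _ = 1 := by simp [hK x]

lemma uvv_le_sv : ∀ n x, uvv K A C n x ≤ sv K C n x := by
  intro n
  induction n with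
  | zero =>
    intro x; simp only [uvv, sv]
    split
    · simp
    · split <;> simp
  | succ n ih =>
    intro x
    simp only [uvv, sv]
    split
    · simp
    · exact Finset.sum_le_sum fun y _ => mul_le_mul_right (ih y) _

lemma uvv_self_eq_zero : ∀ n x, uvv K A A n x = 0 := by
  intro n
  induction n with
  | zero =>
    intro x; simp only [uvv]
    split
    · rfl
    · simp_all
  | succ n ih => intro x; simp [uvv, ih]

lemma fpv_eq_zero_of_not_mem (hc : c ∉ C) : ∀ n x, fpv K C n x c = 0 := by
  intro n
  induction n with
  | zero =>
    intro x; simp only [fpv]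
    split
    · rename_i h; exact absurd (h.2 ▸ h.1) hc
    · rfl
  | succ n ih => intro x; simp [fpv, ih]

lemma sv_mem_eq_zero (hx : x ∈ C) (n : ℕ) : sv K C n x = 0 := by
  cases n <;> simp [sv, hx]

/-- first-passage decomposition of `av` at `C`. -/
lemma av_decomp (n : ℕ) :
    ∀ x, av K A n x = uvv K A C n x +
      ∑ j ∈ Finset.range (n+1), ∑ c, fpv K C j x c * av K A (n - j) c := by
  induction n with
  | zero =>
    intro x
    simp only [uvv, av, fpv, Finset.range_one, Finset.sum_singleton, Nat.sub_zero]
    by_cases hx : x ∈ C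
    · simp [fpv, hx, av, ite_mul, Finset.sum_ite_eq]
    · simp [fpv, hx]
  | succ n ih =>
    intro x
    rw [Finset.sum_range_succ']
    by_cases hx : x ∈ C
    · simp only [uvv, fpv, if_pos hx, hx, true_and, zero_add, Nat.sub_zero,
        zero_mul, Finset.sum_const_zero, ite_mul, one_mul, zero_mul]
      simp [Finset.sum_ite_eq]
    · have key : ∀ j ∈ Finset.range (n+1),
          (∑ c, fpv K C (j+1) x c * av K A (n + 1 - (j+1)) c)
          = ∑ y, K x y * ∑ c, fpv K C j y c * av K A (n - j) c := by
        intro j _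
        simp only [fpv, if_neg hx, Nat.succ_sub_succ, Finset.sum_mul]
        rw [Finset.sum_comm]
        refine Finset.sum_congr rfl fun y _ => ?_
        rw [Finset.mul_sum]
        exact Finset.sum_congr rfl fun c _ => by rw [mul_assoc]
      rw [Finset.sum_congr rfl key]
      simp only [uvv, fpv, if_neg hx, hx, false_and, if_false, zero_mul,
        Finset.sum_const_zero, add_zero]
      rw [Finset.sum_comm]
      calc av K A (n+1) x = ∑ y, K x y * av K A n y := by simp only [av]
        _ = ∑ y, K x y * (uvv K A C n y
              + ∑ j ∈ Finset.range (n+1), ∑ c, fpv K C j y c * av K A (n - j) c) := by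
            exact Finset.sum_congr rfl fun y _ => by rw [← ih y]
        _ = _ := by
            simp only [mul_add, Finset.sum_add_distrib, Finset.mul_sum]

/-- `P_x(τ_C ≤ n) + P_x(τ_C > n) = 1`. -/
lemma fpv_total (hK : IsStochastic K) (n : ℕ) :
    ∀ x, (∑ j ∈ Finset.range (n+1), ∑ c, fpv K C j x c) + sv K C n x = 1 := by
  induction n with
  | zero =>
    intro x
    simp only [fpv, sv, Finset.range_one, Finset.sum_singleton]
    by_cases hx : x ∈ C
    · simp [fpv, hx, Finset.sum_ite_eq]
    · simp [fpv, hx]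
  | succ n ih =>
    intro x
    rw [Finset.sum_range_succ']
    by_cases hx : x ∈ C
    · simp only [fpv, sv, if_pos hx, hx, true_and, Finset.sum_const_zero, add_zero]
      simp [Finset.sum_ite_eq]
    · simp only [fpv, sv, if_neg hx, hx, false_and, if_false,
        Finset.sum_const_zero, add_zero]
      have key : ∀ j ∈ Finset.range (n+1),
          (∑ c, ∑ y, K x y * fpv K C j y c) = ∑ y, K x y * ∑ c, fpv K C j y c := by
        intro j _
        rw [Finset.sum_comm]
        exact Finset.sum_congr rfl fun y _ => (Finset.mul_sum _ _ _).symm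
      rw [Finset.sum_congr rfl key, Finset.sum_comm, ← Finset.sum_add_distrib]
      rw [Finset.sum_congr rfl (fun y _ => by rw [← Finset.mul_sum] :
        ∀ y ∈ Finset.univ, (∑ j ∈ Finset.range (n+1), K x y * ∑ c, fpv K C j y c)
          + K x y * sv K C n y
          = K x y * (∑ j ∈ Finset.range (n+1), ∑ c, fpv K C j y c) + K x y * sv K C n y)]
      calc ∑ y, (K x y * ∑ j ∈ Finset.range (n+1), ∑ c, fpv K C j y c
              + K x y * sv K C n y)
          = ∑ y, K x y * ((∑ j ∈ Finset.range (n+1), ∑ c, fpv K C j y c)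
              + sv K C n y) := by simp [mul_add]
        _ = 1 := by
            rw [Finset.sum_congr rfl fun y _ => by rw [ih y, mul_one]]
            exact hK x

/-- stationarity: `∑ π x av n x = π(A)`. -/
lemma av_stat (hsum : ∀ y, ∑ x, π x * K x y = π y) (n : ℕ) :
    ∑ x, π x * av K A n x = ∑ a ∈ A, π a := by
  induction n with
  | zero =>
    simp only [av, mul_ite, mul_one, mul_zero]
    rw [Finset.sum_ite_mem, Finset.univ_inter]
  | succ n ih =>
    calc ∑ x, π x * av K A (n+1) x
        = ∑ x, ∑ y, π x * K x y * av K A n y := by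
          simp only [av]
          exact Finset.sum_congr rfl fun x _ => by rw [Finset.mul_sum]; simp [mul_assoc]
      _ = ∑ y, (∑ x, π x * K x y) * av K A n y := by
          rw [Finset.sum_comm]
          exact Finset.sum_congr rfl fun y _ => (Finset.sum_mul _ _ _).symm
      _ = ∑ y, π y * av K A n y := by
          exact Finset.sum_congr rfl fun y _ => by rw [hsum y]
      _ = _ := ih


section ZDomain

variable {K : S → S → ℝ≥0∞} {A B C : Finset S} {π : S → ℝ≥0∞} {x c : S} {z : ℝ≥0∞}

/-- discounted convolution identity. -/
lemma disc_conv (z : ℝ≥0∞) (x : S) (fp : ℕ → S → S → ℝ≥0∞) (avv : ℕ → S → ℝ≥0∞) :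
    ∑' n, z^n * ∑ j ∈ Finset.range (n+1), ∑ c, fp j x c * avv (n-j) c
    = ∑ c, (∑' j, z^j * fp j x c) * (∑' l, z^l * avv l c) := by
  have step1 : ∀ n : ℕ, z^n * ∑ j ∈ Finset.range (n+1), ∑ c, fp j x c * avv (n-j) c
      = ∑ c, ∑ j ∈ Finset.range (n+1), (z^j * fp j x c) * (z^(n-j) * avv (n-j) c) := by
    intro n
    rw [Finset.mul_sum]
    have inner : ∀ j ∈ Finset.range (n+1),
        z^n * ∑ c, fp j x c * avv (n-j) c
        = ∑ c, (z^j * fp j x c) * (z^(n-j) * avv (n-j) c) := by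
      intro j hj
      have hj' : j ≤ n := Nat.lt_succ_iff.mp (Finset.mem_range.mp hj)
      rw [Finset.mul_sum]
      refine Finset.sum_congr rfl fun c _ => ?_
      rw [show (z^j * fp j x c) * (z^(n-j) * avv (n-j) c)
          = (z^j * z^(n-j)) * (fp j x c * avv (n-j) c) by ring,
        ← pow_add, Nat.add_sub_cancel' hj']
    rw [Finset.sum_congr rfl inner, Finset.sum_comm]
  rw [tsum_congr step1, Summable.tsum_finsetSum (fun c _ => ENNReal.summable)]
  exact Finset.sum_congr rfl fun c _ =>
    ennreal_cauchy (fun j => z^j * fp j x c) (fun l => z^l * avv l c)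

/-- discounted decomposition of `av` at `C`. -/
lemma Wz_decomp (z : ℝ≥0∞) (x : S) :
    ∑' n, z^n * av K A n x
    = (∑' n, z^n * uvv K A C n x)
      + ∑ c, (∑' j, z^j * fpv K C j x c) * (∑' l, z^l * av K A l c) := by
  calc ∑' n, z^n * av K A n x
      = ∑' n, (z^n * uvv K A C n x
          + z^n * ∑ j ∈ Finset.range (n+1), ∑ c, fpv K C j x c * av K A (n-j) c) := by
        refine tsum_congr fun n => ?_
        rw [av_decomp (C := C) n x, mul_add]
    _ = (∑' n, z^n * uvv K A C n x)
        + ∑' n, z^n * ∑ j ∈ Finset.range (n+1), ∑ c, fpv K C j x c * av K A (n-j) c :=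
        ENNReal.tsum_add
    _ = _ := by rw [disc_conv]

/-- discounted total first-passage mass: `F_z + (1-z)·H_z = 1`. -/
lemma Fz_total (hK : IsStochastic K) (hz : z < 1) (x : S) :
    (∑ c, ∑' j, z^j * fpv K C j x c) + (1 - z) * ∑' n, z^n * sv K C n x = 1 := by
  have hz1 : z ≤ 1 := hz.le
  set t : ℝ≥0∞ := 1 - z with ht
  have htz : t + z = 1 := tsub_add_cancel_of_le hz1
  -- difference relation
  have qd : ∀ n y, z^(n+1) * ∑ c, fpv K C (n+1) y c + z^(n+1) * sv K C (n+1) y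
      = z * (z^n * sv K C n y) := by
    intro n y
    have h1 := fpv_total (C := C) hK n y
    have h2 := fpv_total (C := C) hK (n+1) y
    rw [Finset.sum_range_succ] at h2
    have hfin : (∑ j ∈ Finset.range (n+1), ∑ c, fpv K C j y c) ≠ ∞ := by
      intro hcon
      rw [hcon] at h1; simp at h1
    have : (∑ c, fpv K C (n+1) y c) + sv K C (n+1) y = sv K C n y := by
      refine (ENNReal.add_right_inj hfin).mp ?_
      calc (∑ j ∈ Finset.range (n+1), ∑ c, fpv K C j y c)
            + ((∑ c, fpv K C (n+1) y c) + sv K C (n+1) y)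
          = (∑ j ∈ Finset.range (n+1), ∑ c, fpv K C j y c)
            + (∑ c, fpv K C (n+1) y c) + sv K C (n+1) y := by ring
        _ = 1 := h2
        _ = _ := h1.symm
    rw [← mul_add, this, ← mul_assoc, ← pow_succ']
  -- telescoping identity
  have Ident : ∀ N : ℕ, (∑ j ∈ Finset.range (N+1), z^j * ∑ c, fpv K C j x c)
      + (t * ∑ k ∈ Finset.range N, z^k * sv K C k x + z^N * sv K C N x) = 1 := by
    intro N
    induction N with
    | zero =>
      simp only [Finset.range_one, Finset.sum_singleton, Finset.range_zero,
        Finset.sum_empty, mul_zero, zero_add, pow_zero, one_mul]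
      simpa using fpv_total (C := C) hK 0 x
    | succ N ihN =>
      rw [Finset.sum_range_succ (f := fun j => z^j * ∑ c, fpv K C j x c),
        Finset.sum_range_succ (f := fun k => z^k * sv K C k x)]
      calc (∑ j ∈ Finset.range (N+1), z^j * ∑ c, fpv K C j x c)
            + z^(N+1) * ∑ c, fpv K C (N+1) x c
            + (t * ((∑ k ∈ Finset.range N, z^k * sv K C k x) + z^N * sv K C N x)
              + z^(N+1) * sv K C (N+1) x)
          = (∑ j ∈ Finset.range (N+1), z^j * ∑ c, fpv K C j x c)
            + t * (∑ k ∈ Finset.range N, z^k * sv K C k x)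
            + ((z^(N+1) * ∑ c, fpv K C (N+1) x c + z^(N+1) * sv K C (N+1) x)
              + t * (z^N * sv K C N x)) := by ring
        _ = (∑ j ∈ Finset.range (N+1), z^j * ∑ c, fpv K C j x c)
            + t * (∑ k ∈ Finset.range N, z^k * sv K C k x)
            + ((z + t) * (z^N * sv K C N x)) := by rw [qd N x]; ring
        _ = (∑ j ∈ Finset.range (N+1), z^j * ∑ c, fpv K C j x c)
            + (t * (∑ k ∈ Finset.range N, z^k * sv K C k x) + z^N * sv K C N x) := by
            rw [add_comm z t, htz, one_mul]; ring
        _ = 1 := ihN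
  -- pass to the limit
  have swap : (∑ c, ∑' j, z^j * fpv K C j x c) = ∑' j, z^j * ∑ c, fpv K C j x c := by
    rw [← Summable.tsum_finsetSum (fun c _ => ENNReal.summable)]
    exact tsum_congr fun j => (Finset.mul_sum _ _ _).symm
  rw [swap]
  refine le_antisymm ?_ ?_
  · -- ≤ 1 : via partial sums
    have hF : (∑' j, z^j * ∑ c, fpv K C j x c)
        = ⨆ N : ℕ, ∑ j ∈ Finset.range (N+1), z^j * ∑ c, fpv K C j x c := by
      rw [ENNReal.tsum_eq_iSup_nat' (Filter.tendsto_add_atTop_nat 1)]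
    have hH : t * ∑' n, z^n * sv K C n x
        = ⨆ N : ℕ, t * ∑ k ∈ Finset.range N, z^k * sv K C k x := by
      rw [ENNReal.tsum_eq_iSup_nat, ENNReal.mul_iSup]
    rw [hF, hH, ENNReal.iSup_add_iSup_of_monotone]
    · exact iSup_le fun N => le_trans (by exact add_le_add_right le_self_add _) (Ident N).le
    · intro i j hij
      exact Finset.sum_le_sum_of_subset (by gcongr <;> omega)
    · intro i j hij
      exact mul_le_mul_right (Finset.sum_le_sum_of_subset (by gcongr)) t
  · -- ≥ 1 : add the vanishing tail
    have hbound : ∀ N : ℕ, (1:ℝ≥0∞) ≤ ((∑' j, z^j * ∑ c, fpv K C j x c)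
        + t * ∑' n, z^n * sv K C n x) + z^N := by
      intro N
      calc (1:ℝ≥0∞) = _ := (Ident N).symm
        _ ≤ ((∑' j, z^j * ∑ c, fpv K C j x c) + t * ∑' n, z^n * sv K C n x) + z^N := by
            have b1 : (∑ j ∈ Finset.range (N+1), z^j * ∑ c, fpv K C j x c)
                ≤ ∑' j, z^j * ∑ c, fpv K C j x c := ENNReal.sum_le_tsum _
            have b2 : t * (∑ k ∈ Finset.range N, z^k * sv K C k x)
                ≤ t * ∑' n, z^n * sv K C n x :=
              mul_le_mul_right (ENNReal.sum_le_tsum _) t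
            have b3 : z^N * sv K C N x ≤ z^N := by
              calc z^N * sv K C N x ≤ z^N * 1 := mul_le_mul_right (sv_le_one hK N x) _
                _ = z^N := mul_one _
            calc _ ≤ ((∑' j, z^j * ∑ c, fpv K C j x c)
                  + (t * ∑' n, z^n * sv K C n x + z^N)) := by
                  exact add_le_add b1 (add_le_add b2 b3)
              _ = _ := by ring
    have htend : Filter.Tendsto
        (fun N : ℕ => ((∑' j, z^j * ∑ c, fpv K C j x c)
          + t * ∑' n, z^n * sv K C n x) + z^N) Filter.atTop
        (nhds (((∑' j, z^j * ∑ c, fpv K C j x c) + t * ∑' n, z^n * sv K C n x) + 0)) := by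
      exact Filter.Tendsto.const_add _ (ENNReal.tendsto_pow_atTop_nhds_zero_of_lt_one hz)
    rw [add_zero] at htend
    exact ge_of_tendsto htend (Filter.Eventually.of_forall hbound)

end ZDomain

section Meas

variable {K : S → S → ℝ≥0∞} {C : Finset S} {x : S}
  [MeasurableSpace S] {P : S → Measure (ℕ → S)}

/-- weight of a finite path. -/
noncomputable def wt (K : S → S → ℝ≥0∞) (x : S) {n : ℕ} (g : Fin (n+1) → S) : ℝ≥0∞ :=
  (if g 0 = x then 1 else 0) * ∏ i : Fin n, K (g i.castSucc) (g i.succ)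

/-- extension of a finite path to `ℕ → S`. -/
def ext {n : ℕ} (g : Fin (n+1) → S) : ℕ → S :=
  fun i => if h : i < n+1 then g ⟨i, h⟩ else g 0

variable {K : S → S → ℝ≥0∞} {C : Finset S} {x : S}
  [MeasurableSpace S] {P : S → Measure (ℕ → S)}

lemma cyl_meas (hMC : IsMarkovChain K P) (x : S) {n : ℕ} (g : Fin (n+1) → S) :
    P x {ω | ∀ i ≤ n, ω i = ext g i} = wt K x g := by
  rw [hMC.2 x n (ext g)]
  unfold wt
  congr 1
  · rw [← Fin.prod_univ_eq_prod_range (fun i => K (ext g i) (ext g (i+1))) n]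
    refine Finset.prod_congr rfl fun i _ => ?_
    have h1 : ext g i.1 = g i.castSucc := by
      have : (i.1 : ℕ) < n + 1 := Nat.lt_succ_of_lt i.2
      simp only [ext, dif_pos this]
      rfl
    have h2 : ext g (i.1+1) = g i.succ := by
      have : (i.1+1 : ℕ) < n + 1 := Nat.succ_lt_succ i.2
      simp only [ext, dif_pos this]
      rfl
    rw [h1, h2]

/-- killed path-sum equals `sv`. -/
lemma wt_sum (hK : IsStochastic K) :
    ∀ (n : ℕ) (x : S),
      (∑ g : Fin (n+1) → S, (if (∀ i, g i ∉ C) then (1:ℝ≥0∞) else 0) * wt K x g)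
      = sv K C n x := by
  intro n
  induction n with
  | zero =>
    intro x
    have hsummand : ∀ g : Fin 1 → S,
        (if (∀ i, g i ∉ C) then (1:ℝ≥0∞) else 0) * wt K x g
        = (fun y => (if y ∉ C then (1:ℝ≥0∞) else 0) * (if y = x then 1 else 0))
            ((Equiv.funUnique (Fin 1) S) g) := by
      intro g
      show _ = (if g 0 ∉ C then (1:ℝ≥0∞) else 0) * (if g 0 = x then 1 else 0)
      unfold wt
      simp [Fin.forall_fin_one]
    rw [Finset.sum_congr rfl fun g _ => hsummand g,
      Equiv.sum_comp (Equiv.funUnique (Fin 1) S)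
        (fun y => (if y ∉ C then (1:ℝ≥0∞) else 0) * (if y = x then 1 else 0)),
      Finset.sum_eq_single_of_mem x (Finset.mem_univ x) (fun y _ hyx => by simp [hyx])]
    by_cases hx : x ∈ C <;> simp [sv, hx]
  | succ n ih =>
    intro x
    have key : ∀ (y : S) (g' : Fin (n+1) → S),
        (if (∀ i, (Fin.cons (α := fun _ : Fin (n+2) => S) y g') i ∉ C) then (1:ℝ≥0∞) else 0) * wt K x ((Fin.cons (α := fun _ : Fin (n+2) => S) y g'))
        = (if y = x then 1 else 0) * ((if y ∈ C then 0 else 1)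
            * (K y (g' 0) * ((if (∀ i, g' i ∉ C) then (1:ℝ≥0∞) else 0) * wt K (g' 0) g'))) := by
      intro y g'
      have hsplit : (∀ i, (Fin.cons (α := fun _ : Fin (n+2) => S) y g') i ∉ C) ↔ (y ∉ C ∧ ∀ i, g' i ∉ C) := by
        constructor
        · intro h
          exact ⟨by simpa using h 0, fun i => by simpa [Fin.cons_succ] using h i.succ⟩
        · rintro ⟨h0, hs⟩ i
          rcases Fin.eq_zero_or_eq_succ i with rfl | ⟨j, rfl⟩
          · simpa using h0
          · simpa [Fin.cons_succ] using hs j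
      have hwt : wt K x ((Fin.cons (α := fun _ : Fin (n+2) => S) y g')) = (if y = x then 1 else 0)
          * (K y (g' 0) * ∏ i : Fin n, K (g' i.castSucc) (g' i.succ)) := by
        unfold wt
        rw [Fin.prod_univ_succ]
        simp only [Fin.cons_zero, Fin.castSucc_zero, ← Fin.succ_castSucc, Fin.cons_succ]
      have hwt' : wt K (g' 0) g' = ∏ i : Fin n, K (g' i.castSucc) (g' i.succ) := by
        unfold wt; simp
      rw [hwt, hwt']
      simp only [hsplit]
      by_cases h1 : y ∈ C <;> by_cases h2 : (∀ i, g' i ∉ C) <;>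
        by_cases h3 : y = x <;> simp [h1, h2, h3] <;> try ring
    calc ∑ g : Fin (n+2) → S, (if (∀ i, g i ∉ C) then (1:ℝ≥0∞) else 0) * wt K x g
        = ∑ p : S × (Fin (n+1) → S),
            (if (∀ i, (Fin.consEquiv (fun _ : Fin (n+2) => S)) p i ∉ C) then (1:ℝ≥0∞) else 0)
              * wt K x ((Fin.consEquiv (fun _ : Fin (n+2) => S)) p) :=
          (Equiv.sum_comp (Fin.consEquiv (fun _ : Fin (n+2) => S)) _).symm
      _ = ∑ y : S, ∑ g' : Fin (n+1) → S, (if y = x then 1 else 0) * ((if y ∈ C then 0 else 1)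
            * (K y (g' 0) * ((if (∀ i, g' i ∉ C) then (1:ℝ≥0∞) else 0) * wt K (g' 0) g'))) := by
          rw [Fintype.sum_prod_type]
          exact Finset.sum_congr rfl fun y _ => Finset.sum_congr rfl fun g' _ => key y g'
      _ = (if x ∈ C then 0 else 1) * ∑ g' : Fin (n+1) → S,
            K x (g' 0) * ((if (∀ i, g' i ∉ C) then (1:ℝ≥0∞) else 0) * wt K (g' 0) g') := by
          rw [Finset.sum_congr rfl (fun y (_ : y ∈ Finset.univ) => (Finset.mul_sum _ _ _).symm)]
          rw [Finset.sum_eq_single_of_mem x (Finset.mem_univ x) (fun y _ hyx => by simp [hyx])]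
          simp [Finset.mul_sum]
      _ = (if x ∈ C then 0 else 1) * ∑ u, K x u
            * ∑ g' : Fin (n+1) → S, (if (∀ i, g' i ∉ C) then (1:ℝ≥0∞) else 0) * wt K u g' := by
          congr 1
          have ptw : ∀ g' : Fin (n+1) → S,
              K x (g' 0) * ((if (∀ i, g' i ∉ C) then (1:ℝ≥0∞) else 0) * wt K (g' 0) g')
              = ∑ u, K x u * ((if (∀ i, g' i ∉ C) then (1:ℝ≥0∞) else 0) * wt K u g') := by
            intro g'
            rw [Finset.sum_eq_single_of_mem (g' 0) (Finset.mem_univ _)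
              (fun u _ hu => by unfold wt; simp [Ne.symm hu])]
          rw [Finset.sum_congr rfl fun g' _ => ptw g', Finset.sum_comm]
          exact Finset.sum_congr rfl fun u _ => (Finset.mul_sum _ _ _).symm
      _ = sv K C (n+1) x := by
          rw [Finset.sum_congr rfl fun u (_ : u ∈ Finset.univ) => by rw [ih u]]
          show _ = if x ∈ C then 0 else ∑ y, K x y * sv K C n y
          by_cases hx : x ∈ C <;> simp [hx]

lemma sv_empty (hK : IsStochastic K) : ∀ (n : ℕ) (x : S), sv K (∅ : Finset S) n x = 1 := by
  intro n
  induction n with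
  | zero => intro x; simp [sv]
  | succ n ih =>
    intro x
    show (if x ∈ (∅ : Finset S) then 0 else ∑ y, K x y * sv K ∅ n y) = 1
    simp only [Finset.notMem_empty, if_false]
    rw [Finset.sum_congr rfl fun y _ => by rw [ih y, mul_one]]
    exact hK x

lemma wt_total (hK : IsStochastic K) (n : ℕ) (x : S) :
    ∑ g : Fin (n+1) → S, wt K x g = 1 := by
  have h := wt_sum (C := (∅ : Finset S)) hK n x
  rw [sv_empty hK n x] at h
  rw [← h]
  refine Finset.sum_congr rfl fun g _ => ?_
  simp

/-- the law of `noHit` equals the killed path-sum. -/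
lemma noHit_meas (hK : IsStochastic K) (hMC : IsMarkovChain K P) (n : ℕ) (x : S) :
    P x (noHit C n) = sv K C n x := by
  classical
  have hprob : IsProbabilityMeasure (P x) := hMC.1 x
  -- upper bound
  have cover : noHit C n ⊆ ⋃ g ∈ Finset.univ.filter
      (fun g : Fin (n+1) → S => ∀ i, g i ∉ C), {ω : ℕ → S | ∀ i ≤ n, ω i = ext g i} := by
    intro ω hω
    refine Set.mem_biUnion (x := fun i : Fin (n+1) => ω i.1)
      (Finset.mem_filter.mpr ⟨Finset.mem_univ _, fun i => hω i.1 (Nat.lt_succ_iff.mp i.2)⟩)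
      (fun i hi => by simp only [ext, dif_pos (Nat.lt_succ_iff.mpr hi)])
  have coverc : (noHit C n)ᶜ ⊆ ⋃ g ∈ Finset.univ.filter
      (fun g : Fin (n+1) → S => ¬ ∀ i, g i ∉ C), {ω : ℕ → S | ∀ i ≤ n, ω i = ext g i} := by
    intro ω hω
    refine Set.mem_biUnion (x := fun i : Fin (n+1) => ω i.1)
      (Finset.mem_filter.mpr ⟨Finset.mem_univ _,
        fun hgood => hω (fun k hk => hgood ⟨k, Nat.lt_succ_iff.mpr hk⟩)⟩)
      (fun i hi => by simp only [ext, dif_pos (Nat.lt_succ_iff.mpr hi)])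
  have hub : P x (noHit C n) ≤ sv K C n x := by
    calc P x (noHit C n) ≤ ∑ g ∈ Finset.univ.filter
          (fun g : Fin (n+1) → S => ∀ i, g i ∉ C), P x {ω : ℕ → S | ∀ i ≤ n, ω i = ext g i} :=
        le_trans (measure_mono cover) (measure_biUnion_finset_le _ _)
      _ = ∑ g ∈ Finset.univ.filter (fun g : Fin (n+1) → S => ∀ i, g i ∉ C), wt K x g :=
        Finset.sum_congr rfl fun g _ => cyl_meas hMC x g
      _ = sv K C n x := by
        rw [← wt_sum (C := C) hK n x, Finset.sum_filter]
        refine Finset.sum_congr rfl fun g _ => ?_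
        by_cases h : (∀ i, g i ∉ C) <;> simp [h]
  have hbadsum : (∑ g ∈ Finset.univ.filter
      (fun g : Fin (n+1) → S => ¬ ∀ i, g i ∉ C), wt K x g) + sv K C n x = 1 := by
    rw [← wt_sum (C := C) hK n x]
    rw [show (∑ g ∈ Finset.univ.filter (fun g : Fin (n+1) → S => ¬ ∀ i, g i ∉ C), wt K x g)
        = ∑ g : Fin (n+1) → S, (if (∀ i, g i ∉ C) then 0 else wt K x g) by
      rw [Finset.sum_filter]
      exact Finset.sum_congr rfl fun g _ => by by_cases h : (∀ i, g i ∉ C) <;> simp [h]]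
    rw [show (∑ g : Fin (n+1) → S, (if (∀ i, g i ∉ C) then (1:ℝ≥0∞) else 0) * wt K x g)
        = ∑ g : Fin (n+1) → S, (if (∀ i, g i ∉ C) then wt K x g else 0) from
      Finset.sum_congr rfl fun g _ => by by_cases h : (∀ i, g i ∉ C) <;> simp [h]]
    rw [← Finset.sum_add_distrib]
    rw [Finset.sum_congr rfl (fun (g : Fin (n+1) → S) _ => by
      by_cases h : (∀ i, g i ∉ C) <;> simp [h] :
        ∀ g ∈ Finset.univ, ((if (∀ i, g i ∉ C) then 0 else wt K x g)
          + if (∀ i, g i ∉ C) then wt K x g else 0) = wt K x g)]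
    exact wt_total hK n x
  have hlb : sv K C n x ≤ P x (noHit C n) := by
    have h1 : (1:ℝ≥0∞) ≤ P x (noHit C n) + ∑ g ∈ Finset.univ.filter
        (fun g : Fin (n+1) → S => ¬ ∀ i, g i ∉ C), wt K x g := by
      calc (1:ℝ≥0∞) = P x Set.univ := (measure_univ).symm
        _ ≤ P x (noHit C n ∪ (noHit C n)ᶜ) := by rw [Set.union_compl_self]
        _ ≤ P x (noHit C n) + P x ((noHit C n)ᶜ) := measure_union_le _ _
        _ ≤ _ := by
            refine add_le_add_right ?_ _
            calc P x ((noHit C n)ᶜ) ≤ _ :=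
              le_trans (measure_mono coverc) (measure_biUnion_finset_le _ _)
              _ ≤ _ := le_of_eq (Finset.sum_congr rfl fun g _ => cyl_meas hMC x g)
    have hbfin : (∑ g ∈ Finset.univ.filter
        (fun g : Fin (n+1) → S => ¬ ∀ i, g i ∉ C), wt K x g) ≠ ∞ := by
      intro hcon
      rw [hcon] at hbadsum
      simp at hbadsum
    rw [← hbadsum, add_comm (P x (noHit C n))] at h1
    exact (ENNReal.add_le_add_iff_left hbfin).mp h1
  exact le_antisymm hub hlb

/-- `expHit` equals the sum of survival probabilities. -/
lemma expHit_eq (hK : IsStochastic K) (hMC : IsMarkovChain K P) (x : S) :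
    expHit P x C = ∑' n, sv K C n x :=
  tsum_congr fun n => noHit_meas hK hMC n x



end Meas

end MChain


/-- The set of "unlucky" starting points `B = {x : E_x[τ_A] > T(1/2)/π(A)}` has
stationary measure at most `1/2`. -/
theorem stmt_10 {S : Type*} [Fintype S] [DecidableEq S] [MeasurableSpace S]
    (K : S → S → ENNReal) (P : S → Measure (ℕ → S)) (π : S → ENNReal)
    (hK : IsStochastic K) (hMC : IsMarkovChain K P)
    (hirr : IsIrreducibleKernel K) (hstat : IsStationaryDistrib K π)
    (A : Finset S) (hA : A.Nonempty) (hApos : 0 < ∑ x ∈ A, π x)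
    (B : Finset S)
    (hB : ∀ x : S, x ∈ B ↔
      (⨆ (C : Finset S) (_ : (2:ENNReal)⁻¹ ≤ ∑ y ∈ C, π y), ⨆ y, expHit P y C) /
        (∑ x ∈ A, π x) < expHit P x A) :
    ∑ x ∈ B, π x ≤ 2⁻¹ := by
  classical
  obtain ⟨a0, ha0⟩ := hA
  have : Nonempty S := ⟨a0⟩
  set πA := ∑ x ∈ A, π x with hπA
  have hπA1 : πA ≤ 1 := by
    rw [← hstat.1]
    exact Finset.sum_le_sum_of_subset (Finset.subset_univ A)
  have hπA0 : πA ≠ 0 := hApos.ne'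
  have hπAtop : πA ≠ ∞ := (lt_of_le_of_lt hπA1 ENNReal.one_lt_top).ne
  set T := ⨆ (C : Finset S) (_ : (2:ENNReal)⁻¹ ≤ ∑ y ∈ C, π y), ⨆ y, expHit P y C with hT
  by_contra hcon
  push_neg at hcon
  have hBne : B.Nonempty := by
    rcases Finset.eq_empty_or_nonempty B with rfl | h
    · simp at hcon
    · exact h
  rcases eq_or_ne T ∞ with hTtop | hTfin
  · obtain ⟨b, hb⟩ := hBne
    have hlt := (hB b).mp hb
    rw [hTtop, ENNReal.top_div_of_ne_top hπAtop] at hlt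
    exact not_top_lt hlt
  -- main case
  have hsvA : ∀ b ∈ B, T / πA < ∑' n, MChain.sv K A n b := by
    intro b hb
    have := (hB b).mp hb
    rwa [MChain.expHit_eq hK hMC b] at this
  set G := ⨆ y, expHit P y B with hG
  have hGT : G ≤ T := by
    rw [hT]
    exact le_iSup_of_le B (by rw [iSup_pos hcon.le])
  have hGfin : G ≠ ∞ := (lt_of_le_of_lt hGT (lt_top_iff_ne_top.mpr hTfin)).ne
  have hGsv : ∀ y, (∑' n, MChain.sv K B n y) ≤ G := by
    intro y
    rw [← MChain.expHit_eq hK hMC y]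
    exact le_iSup (fun y => expHit P y B) y
  -- KEY inequality for each discount z < 1
  have KEY : ∀ z : ℝ≥0∞, z < 1 →
      πA * (B.inf' hBne fun b => ∑' n, z^n * MChain.sv K A n b) ≤ G := by
    intro z hz
    have hz1 : z ≤ 1 := hz.le
    have h1z0 : (1 - z) ≠ 0 := by
      rw [← pos_iff_ne_zero, tsub_pos_iff_lt]; exact hz
    have h1ztop : (1 - z) ≠ ∞ := (lt_of_le_of_lt tsub_le_self ENNReal.one_lt_top).ne
    set Wz : S → ℝ≥0∞ := fun x => ∑' n, z^n * MChain.av K A n x with hWzdef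
    have hWle : ∀ x, Wz x ≤ (1-z)⁻¹ := by
      intro x
      calc Wz x ≤ ∑' n : ℕ, z^n * 1 :=
          ENNReal.tsum_le_tsum fun n => mul_le_mul_right (MChain.av_le_one hK n x) _
        _ = (1-z)⁻¹ := by simp [ENNReal.tsum_geometric]
    set Wmax := Finset.univ.sup' Finset.univ_nonempty Wz with hWmaxdef
    have hWmaxub : Wmax ≤ (1-z)⁻¹ := Finset.sup'_le _ _ fun x _ => hWle x
    have hWmaxfin : Wmax ≠ ∞ := (lt_of_le_of_lt hWmaxub
      (ENNReal.inv_lt_top.mpr (pos_iff_ne_zero.mpr h1z0))).ne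
    set mz := B.inf' hBne fun b => ∑' n, z^n * MChain.sv K A n b with hmzdef
    -- E1 : for b ∈ B
    have hE1 : ∀ b ∈ B, Wz b + (1-z) * mz * Wmax ≤ Wmax := by
      intro b hb
      have hdec := MChain.Wz_decomp (K := K) (A := A) (C := A) z b
      have hU : (∑' n, z^n * MChain.uvv K A A n b) = 0 := by
        simp [MChain.uvv_self_eq_zero]
      have h1 : Wz b ≤ (∑ c, ∑' j, z^j * MChain.fpv K A j b c) * Wmax := by
        calc Wz b = (∑' n, z^n * MChain.uvv K A A n b)
              + ∑ c, (∑' j, z^j * MChain.fpv K A j b c) * Wz c := hdec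
          _ = ∑ c, (∑' j, z^j * MChain.fpv K A j b c) * Wz c := by rw [hU, zero_add]
          _ ≤ ∑ c, (∑' j, z^j * MChain.fpv K A j b c) * Wmax :=
            Finset.sum_le_sum fun c _ =>
              mul_le_mul_right (Finset.le_sup' Wz (Finset.mem_univ c)) _
          _ = _ := by rw [Finset.sum_mul]
      have h2 : mz ≤ ∑' n, z^n * MChain.sv K A n b := Finset.inf'_le _ hb
      calc Wz b + (1-z) * mz * Wmax
          ≤ (∑ c, ∑' j, z^j * MChain.fpv K A j b c) * Wmax
            + (1-z) * (∑' n, z^n * MChain.sv K A n b) * Wmax := by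
            exact add_le_add h1 (by gcongr)
        _ = ((∑ c, ∑' j, z^j * MChain.fpv K A j b c)
            + (1-z) * ∑' n, z^n * MChain.sv K A n b) * Wmax := by ring
        _ = 1 * Wmax := by rw [MChain.Fz_total hK hz b]
        _ = Wmax := one_mul _
    -- E2 : for all x
    set β := B.sup' hBne Wz with hβdef
    have hE2 : ∀ x, Wz x ≤ G + β := by
      intro x
      have hdec := MChain.Wz_decomp (K := K) (A := A) (C := B) z x
      have hU : (∑' n, z^n * MChain.uvv K A B n x) ≤ G := by
        calc ∑' n, z^n * MChain.uvv K A B n x ≤ ∑' n, MChain.sv K B n x :=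
            ENNReal.tsum_le_tsum fun n => by
              calc z^n * MChain.uvv K A B n x ≤ 1 * MChain.sv K B n x :=
                  mul_le_mul' (pow_le_one' hz1 n) (MChain.uvv_le_sv n x)
                _ = _ := one_mul _
          _ ≤ G := hGsv x
      have hFle1 : (∑ c, ∑' j, z^j * MChain.fpv K B j x c) ≤ 1 := by
        have := MChain.Fz_total (C := B) hK hz x
        exact this ▸ le_self_add
      calc Wz x = (∑' n, z^n * MChain.uvv K A B n x)
            + ∑ c, (∑' j, z^j * MChain.fpv K B j x c) * Wz c := hdec
        _ ≤ G + ∑ c, (∑' j, z^j * MChain.fpv K B j x c) * β := by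
            refine add_le_add hU (Finset.sum_le_sum fun c _ => ?_)
            by_cases hc : c ∈ B
            · exact mul_le_mul_right (Finset.le_sup' Wz hc) _
            · simp [MChain.fpv_eq_zero_of_not_mem hc]
        _ = G + (∑ c, ∑' j, z^j * MChain.fpv K B j x c) * β := by rw [Finset.sum_mul]
        _ ≤ G + 1 * β := by gcongr
        _ = G + β := by rw [one_mul]
    -- E3 : stationarity
    have hE3 : πA * (1-z)⁻¹ ≤ Wmax := by
      have hswap : ∑ x, π x * Wz x = πA * (1-z)⁻¹ := by
        calc ∑ x, π x * Wz x = ∑ x, ∑' n, π x * (z^n * MChain.av K A n x) := by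
              exact Finset.sum_congr rfl fun x _ => (ENNReal.tsum_mul_left).symm
          _ = ∑' n, ∑ x, π x * (z^n * MChain.av K A n x) :=
              (Summable.tsum_finsetSum fun x _ => ENNReal.summable).symm
          _ = ∑' n : ℕ, z^n * πA := by
              refine tsum_congr fun n => ?_
              calc ∑ x, π x * (z^n * MChain.av K A n x)
                  = z^n * ∑ x, π x * MChain.av K A n x := by
                    rw [Finset.mul_sum]
                    exact Finset.sum_congr rfl fun x _ => by ring
                _ = z^n * πA := by rw [MChain.av_stat hstat.2 n]
          _ = πA * (1-z)⁻¹ := by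
              rw [ENNReal.tsum_mul_right, ENNReal.tsum_geometric, mul_comm]
      calc πA * (1-z)⁻¹ = ∑ x, π x * Wz x := hswap.symm
        _ ≤ ∑ x, π x * Wmax :=
            Finset.sum_le_sum fun x _ =>
              mul_le_mul_right (Finset.le_sup' Wz (Finset.mem_univ x)) _
        _ = (∑ x, π x) * Wmax := (Finset.sum_mul _ _ _).symm
        _ = Wmax := by rw [hstat.1, one_mul]
    -- combine
    have hβfin : β ≠ ∞ := by
      have : β ≤ Wmax := Finset.sup'_le _ _ fun b _ => Finset.le_sup' Wz (Finset.mem_univ b)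
      exact (lt_of_le_of_lt this (lt_top_iff_ne_top.mpr hWmaxfin)).ne
    obtain ⟨b0, hb0, hb0eq⟩ := Finset.exists_mem_eq_sup' hBne Wz
    obtain ⟨x0, _, hx0eq⟩ := Finset.exists_mem_eq_sup' Finset.univ_nonempty Wz
    have hcomb : β + (1-z) * mz * Wmax ≤ β + G := by
      calc β + (1-z) * mz * Wmax = Wz b0 + (1-z) * mz * Wmax := by rw [hβdef, hb0eq]
        _ ≤ Wmax := hE1 b0 hb0
        _ = Wz x0 := hx0eq
        _ ≤ G + β := hE2 x0
        _ = β + G := add_comm _ _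
    have hstep : (1-z) * mz * Wmax ≤ G := (ENNReal.add_le_add_iff_left hβfin).mp hcomb
    have hπAle : πA ≤ (1-z) * Wmax := by
      calc πA = πA * (1-z)⁻¹ * (1-z) := by
            rw [mul_assoc, ENNReal.inv_mul_cancel h1z0 h1ztop, mul_one]
        _ ≤ Wmax * (1-z) := mul_le_mul_left hE3 _
        _ = (1-z) * Wmax := mul_comm _ _
    calc πA * mz ≤ ((1-z) * Wmax) * mz := mul_le_mul_left hπAle _
      _ = (1-z) * mz * Wmax := by ring
      _ ≤ G := hstep
  -- pass to the limit z ↑ 1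
  set zs : ℕ → ℝ≥0∞ := fun k => 1 - ((k:ℝ≥0∞)+1)⁻¹ with hzsdef
  have hzslt : ∀ k, zs k < 1 := by
    intro k
    refine ENNReal.sub_lt_self ENNReal.one_ne_top one_ne_zero ?_
    exact ENNReal.inv_ne_zero.mpr (by simp)
  have hzsmono : Monotone zs := by
    intro k l hkl
    refine tsub_le_tsub_left ?_ 1
    exact ENNReal.inv_le_inv.mpr (add_le_add_left (by exact_mod_cast hkl) 1)
  have hzstend : Filter.Tendsto zs Filter.atTop (nhds 1) := by
    have h1 : Filter.Tendsto (fun k : ℕ => ((k:ℝ≥0∞)+1)⁻¹) Filter.atTop (nhds 0) := by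
      refine (ENNReal.tendsto_inv_nat_nhds_zero.comp
        (Filter.tendsto_add_atTop_nat 1)).congr fun k => ?_
      simp only [Function.comp_apply]
      push_cast
      ring
    have := ENNReal.Tendsto.sub (tendsto_const_nhds (x := (1:ℝ≥0∞)))
      h1 (Or.inl ENNReal.one_ne_top)
    simpa using this
  set m := B.inf' hBne fun b => ∑' n, MChain.sv K A n b with hmdef
  -- each b : sup over k recovers the full sum
  have hsup : ∀ b : S, (∑' n, MChain.sv K A n b)
      ≤ ⨆ k : ℕ, ∑' n, (zs k)^n * MChain.sv K A n b := by
    intro b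
    rw [ENNReal.tsum_eq_iSup_nat]
    refine iSup_le fun N => ?_
    have htendN : Filter.Tendsto
        (fun k => ∑ n ∈ Finset.range N, (zs k)^n * MChain.sv K A n b)
        Filter.atTop (nhds (∑ n ∈ Finset.range N, 1^n * MChain.sv K A n b)) := by
      refine tendsto_finset_sum _ fun n _ => ?_
      refine ENNReal.Tendsto.mul_const (ENNReal.Tendsto.pow hzstend) ?_
      exact Or.inl (by simp)
    have heq : (∑ n ∈ Finset.range N, 1^n * MChain.sv K A n b)
        = ∑ n ∈ Finset.range N, MChain.sv K A n b := by simp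
    rw [heq] at htendN
    refine le_of_tendsto htendN (Filter.Eventually.of_forall fun k => ?_)
    calc ∑ n ∈ Finset.range N, (zs k)^n * MChain.sv K A n b
        ≤ ∑' n, (zs k)^n * MChain.sv K A n b := ENNReal.sum_le_tsum _
      _ ≤ ⨆ k : ℕ, ∑' n, (zs k)^n * MChain.sv K A n b :=
        le_iSup (fun k : ℕ => ∑' n, (zs k)^n * MChain.sv K A n b) k
  -- min/sup exchange
  have hmle : m ≤ ⨆ k : ℕ, B.inf' hBne fun b => ∑' n, (zs k)^n * MChain.sv K A n b := by
    refine le_of_forall_lt fun c hc => ?_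
    rw [hmdef, Finset.lt_inf'_iff] at hc
    have hex : ∀ b : S, ∃ k : ℕ, b ∈ B → c < ∑' n, (zs k)^n * MChain.sv K A n b := by
      intro b
      by_cases hb : b ∈ B
      · have : c < ⨆ k : ℕ, ∑' n, (zs k)^n * MChain.sv K A n b :=
          lt_of_lt_of_le (hc b hb) (hsup b)
        obtain ⟨k, hk⟩ := lt_iSup_iff.mp this
        exact ⟨k, fun _ => hk⟩
      · exact ⟨0, fun h => absurd h hb⟩
    choose fk hfk using hex
    set k0 := B.sup fk with hk0
    refine lt_of_lt_of_le ?_ (le_iSup (fun k => B.inf' hBne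
      fun b => ∑' n, (zs k)^n * MChain.sv K A n b) k0)
    rw [Finset.lt_inf'_iff]
    intro b hb
    refine lt_of_lt_of_le (hfk b hb) (ENNReal.tsum_le_tsum fun n => ?_)
    refine mul_le_mul_left (pow_le_pow_left' ?_ n) _
    exact hzsmono (Finset.le_sup hb)
  -- conclude
  have hfinal : πA * m ≤ G := by
    calc πA * m ≤ πA * ⨆ k : ℕ, B.inf' hBne
          (fun b => ∑' n, (zs k)^n * MChain.sv K A n b) := mul_le_mul_right hmle _
      _ = ⨆ k : ℕ, πA * B.inf' hBne
          (fun b => ∑' n, (zs k)^n * MChain.sv K A n b) := ENNReal.mul_iSup _ _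
      _ ≤ G := iSup_le fun k => KEY (zs k) (hzslt k)
  have hTlt : T < πA * m := by
    have h1 : T / πA < m := (Finset.lt_inf'_iff hBne).mpr hsvA
    calc T = πA * (T / πA) := (ENNReal.mul_div_cancel' (fun h => absurd h hπA0) (fun h => absurd h hπAtop)).symm
      _ < πA * m := ENNReal.mul_lt_mul_right hπA0 hπAtop h1
  exact absurd (lt_of_lt_of_le hTlt (hfinal.trans hGT)) (lt_irrefl T)
end

section
/- Let (u_j)_{j∈S} and (q_j)_{j∈S} be finite families of {0,1}-valued random variables such that for every subset J ⊆ S, E[∏_{j∈J} u_j] ≤ E[∏_{j∈J} q_j]. Then for every s > 0 and nonnegative weights (w_j), E[exp(s · ∑_j w_j u_j)] ≤ E[exp(s · ∑_j w_j q_j)]. -/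
open MeasureTheory

private lemma expand_integral {Ω : Type*} [MeasurableSpace Ω] {S : Type*} [Fintype S]
    (μ : Measure Ω) [IsProbabilityMeasure μ]
    (v : S → Ω → ℝ) (hv : ∀ j, Measurable (v j)) (hv01 : ∀ j ω, v j ω = 0 ∨ v j ω = 1)
    (w : S → ℝ) (hw : ∀ j, 0 ≤ w j) (s : ℝ) (hs : 0 < s) :
    ∫ ω, Real.exp (s * ∑ j, w j * v j ω) ∂μ =
      ∑ J ∈ (Finset.univ : Finset S).powerset,
        (∏ j ∈ J, (Real.exp (s * w j) - 1)) * ∫ ω, ∏ j ∈ J, v j ω ∂μ := by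
  classical
  have hpt : ∀ ω, Real.exp (s * ∑ j, w j * v j ω) =
      ∑ J ∈ (Finset.univ : Finset S).powerset,
        (∏ j ∈ J, (Real.exp (s * w j) - 1)) * ∏ j ∈ J, v j ω := by
    intro ω
    have h1 : Real.exp (s * ∑ j, w j * v j ω) =
        ∏ j, ((Real.exp (s * w j) - 1) * v j ω + 1) := by
      rw [Finset.mul_sum, Real.exp_sum]
      refine Finset.prod_congr rfl fun j _ => ?_
      rcases hv01 j ω with h | h <;> simp [h, mul_assoc]
    rw [h1, Finset.prod_add]
    refine Finset.sum_congr rfl fun J _ => ?_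
    simp [Finset.prod_mul_distrib]
  have hint : ∀ J : Finset S, Integrable
      (fun ω => (∏ j ∈ J, (Real.exp (s * w j) - 1)) * ∏ j ∈ J, v j ω) μ := by
    intro J
    refine Integrable.const_mul ?_ _
    refine Integrable.mono' (integrable_const 1)
      (Finset.measurable_prod J fun j _ => hv j).aestronglyMeasurable
      (Filter.Eventually.of_forall fun ω => ?_)
    rcases J.eq_empty_or_nonempty with rfl | hne
    · simp
    · have h := Finset.prod_induction_nonempty (fun j => v j ω) (fun x => x = 0 ∨ x = 1)
        (by rintro a b (rfl|rfl) (rfl|rfl) <;> simp) hne (fun j _ => hv01 j ω)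
      rcases h with h0 | h0 <;> simp [h0]
  calc ∫ ω, Real.exp (s * ∑ j, w j * v j ω) ∂μ
      = ∫ ω, ∑ J ∈ (Finset.univ : Finset S).powerset,
          (∏ j ∈ J, (Real.exp (s * w j) - 1)) * ∏ j ∈ J, v j ω ∂μ := by
        simp_rw [hpt]
    _ = ∑ J ∈ (Finset.univ : Finset S).powerset,
          ∫ ω, (∏ j ∈ J, (Real.exp (s * w j) - 1)) * ∏ j ∈ J, v j ω ∂μ :=
        integral_finset_sum _ fun J _ => hint J
    _ = _ := by
        refine Finset.sum_congr rfl fun J _ => ?_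
        exact integral_const_mul _ _

/-- Mixed-moment majorization for Boolean families implies domination of exponential
moments of nonnegative weighted sums. -/
theorem stmt_13 {Ω₁ Ω₂ : Type*} [MeasurableSpace Ω₁] [MeasurableSpace Ω₂]
    {S : Type*} [Fintype S]
    (μ : Measure Ω₁) [IsProbabilityMeasure μ] (ν : Measure Ω₂) [IsProbabilityMeasure ν]
    (u : S → Ω₁ → ℝ) (q : S → Ω₂ → ℝ)
    (hu : ∀ j, Measurable (u j)) (hq : ∀ j, Measurable (q j))
    (hu01 : ∀ j ω, u j ω = 0 ∨ u j ω = 1) (hq01 : ∀ j ω, q j ω = 0 ∨ q j ω = 1)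
    (hmaj : ∀ J : Finset S, ∫ ω, ∏ j ∈ J, u j ω ∂μ ≤ ∫ ω, ∏ j ∈ J, q j ω ∂ν)
    (w : S → ℝ) (hw : ∀ j, 0 ≤ w j) (s : ℝ) (hs : 0 < s) :
    ∫ ω, Real.exp (s * ∑ j, w j * u j ω) ∂μ ≤
      ∫ ω, Real.exp (s * ∑ j, w j * q j ω) ∂ν := by
  rw [expand_integral μ u hu hu01 w hw s hs, expand_integral ν q hq hq01 w hw s hs]
  refine Finset.sum_le_sum fun J _ => ?_
  refine mul_le_mul_of_nonneg_left (hmaj J) ?_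
  refine Finset.prod_nonneg fun j _ => ?_
  have : (1:ℝ) ≤ Real.exp (s * w j) := Real.one_le_exp (mul_nonneg hs.le (hw j))
  linarith
end
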